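/- arXiv:1503.00502 — 3 statements merged into one kernel-verified Lean document; each statement's English description precedes it below -/
import Mathlib

section
/- The map k ↦ 8E(k)K(k) − 4(1−k²)K(k)² is a strictly increasing bijection from the interval (0,1) onto the interval (π², ∞); in particular its limit as k → 0⁺ is π² and its limit as k → 1⁻ is +∞. -/
set_option maxHeartbeats 1600000

open MeasureTheory Real Filter Set

noncomputable section

/-- Complete elliptic integral of the first kind. -/
def Kc (k : ℝ) : ℝ := ∫ s in (0:ℝ)..1, 1 / Real.sqrt ((1 - s ^ 2) * (1 - k ^ 2 * s ^ 2))

/-- Complete elliptic integral of the second kind. -/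
def Ec (k : ℝ) : ℝ := ∫ s in (0:ℝ)..1, Real.sqrt ((1 - k ^ 2 * s ^ 2) / (1 - s ^ 2))

namespace EllAux

def Ki (k s : ℝ) : ℝ := 1 / Real.sqrt ((1 - s ^ 2) * (1 - k ^ 2 * s ^ 2))
def Ei (k s : ℝ) : ℝ := Real.sqrt ((1 - k ^ 2 * s ^ 2) / (1 - s ^ 2))

lemma Kc_eq (k : ℝ) : Kc k = ∫ s in (0:ℝ)..1, Ki k s := rfl
lemma Ec_eq (k : ℝ) : Ec k = ∫ s in (0:ℝ)..1, Ei k s := rfl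

lemma Ki_meas (k : ℝ) : Measurable (Ki k) := by
  unfold Ki
  exact measurable_const.div
    (((continuous_const.sub (continuous_pow 2)).mul
      (continuous_const.sub (continuous_const.mul (continuous_pow 2)))).sqrt.measurable)

lemma Ei_meas (k : ℝ) : Measurable (Ei k) := by
  unfold Ei
  exact (((measurable_const.sub ((measurable_id.pow_const 2).const_mul _)).div
    (measurable_const.sub (measurable_id.pow_const 2))).sqrt)

lemma Ki_nonneg (k s : ℝ) : 0 ≤ Ki k s := div_nonneg zero_le_one (Real.sqrt_nonneg _)
lemma Ei_nonneg (k s : ℝ) : 0 ≤ Ei k s := Real.sqrt_nonneg _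

lemma Ki_one (k : ℝ) : Ki k 1 = 0 := by simp [Ki]
lemma Ei_one (k : ℝ) : Ei k 1 = 0 := by simp [Ei]

/-- The basic majorant is integrable. -/
lemma maj_int : IntervalIntegrable (fun s : ℝ => 1 / Real.sqrt (1 - s)) volume 0 1 := by
  have h := (intervalIntegral.intervalIntegrable_rpow' (r := (-(1/2) : ℝ))
      (by norm_num) (a := 0) (b := 1)).comp_sub_left 1
  simp only [sub_zero, sub_self] at h
  apply h.symm.mono_fun ((measurable_const.div
      ((continuous_const.sub continuous_id).sqrt.measurable)).aestronglyMeasurable)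
  filter_upwards [ae_restrict_mem measurableSet_uIoc] with s hs
  rw [Set.uIoc_of_le (by norm_num : (0:ℝ) ≤ 1)] at hs
  rw [Real.norm_eq_abs, Real.norm_eq_abs]
  rcases le_or_gt s 1 with h1 | h1
  · have h0 : (0:ℝ) ≤ 1 - s := by linarith
    rw [Real.rpow_neg h0, ← Real.sqrt_eq_rpow, ← one_div]
    simp
  · linarith [hs.2]

lemma Ki_le {k m s : ℝ} (hk : k^2 ≤ m^2) (hm : m^2 < 1) (hs : s ∈ Set.Ioc 0 1) :
    Ki k s ≤ 1/Real.sqrt (1-m^2) * (1/Real.sqrt (1-s)) := by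
  rcases eq_or_lt_of_le hs.2 with h1 | h1
  · subst h1; simp [Ki_one]
  · have h0 : (0:ℝ) < 1 - s := by linarith
    have hs0 : (0:ℝ) < s := hs.1
    have hk2 : (0:ℝ) < 1 - k^2*s^2 := by nlinarith
    have hb : (0:ℝ) < Real.sqrt ((1-s)*(1-m^2)) := Real.sqrt_pos.2 (by nlinarith)
    have hle : Real.sqrt ((1-s)*(1-m^2)) ≤ Real.sqrt ((1 - s^2)*(1 - k^2*s^2)) := by
      apply Real.sqrt_le_sqrt
      have e3 : (1-s)*(1-m^2) ≤ (1-s^2)*(1-m^2) := by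
        nlinarith [mul_nonneg (mul_nonneg hs0.le h0.le) (by linarith : (0:ℝ) ≤ 1-m^2)]
      have e4 : (1-s^2)*(1-m^2) ≤ (1-s^2)*(1-k^2*s^2) := by
        have hx : (0:ℝ) ≤ 1 - s^2 := by nlinarith
        have hy : k^2*s^2 ≤ m^2 := by nlinarith [mul_nonneg (sq_nonneg s) (by linarith : (0:ℝ) ≤ m^2-k^2), mul_nonneg (sq_nonneg m) (by nlinarith : (0:ℝ) ≤ 1-s^2)]
        nlinarith [mul_nonneg hx (by linarith : (0:ℝ) ≤ m^2 - k^2*s^2)]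
      linarith
    calc Ki k s ≤ 1 / Real.sqrt ((1-s)*(1-m^2)) := one_div_le_one_div_of_le hb hle
    _ = 1/Real.sqrt (1-m^2) * (1/Real.sqrt (1-s)) := by
        rw [Real.sqrt_mul h0.le]; ring

lemma Ei_le {k s : ℝ} (hk : k^2 ≤ 1) (hs : s ∈ Set.Ioc 0 1) :
    Ei k s ≤ 1/Real.sqrt (1-s) := by
  rcases eq_or_lt_of_le hs.2 with h1 | h1
  · subst h1; simp [Ei_one]
  · have h0 : (0:ℝ) < 1 - s := by linarith
    have hs0 : (0:ℝ) < s := hs.1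
    calc Ei k s ≤ Real.sqrt (1/(1-s)) := by
          apply Real.sqrt_le_sqrt
          apply div_le_div₀ zero_le_one (by nlinarith) h0 (by nlinarith)
    _ = 1/Real.sqrt (1-s) := by rw [one_div, Real.sqrt_inv, one_div]

lemma Ki_int {k : ℝ} (hk : k^2 < 1) : IntervalIntegrable (Ki k) volume 0 1 := by
  apply (maj_int.const_mul (1/Real.sqrt (1-k^2))).mono_fun (Ki_meas k).aestronglyMeasurable
  filter_upwards [ae_restrict_mem measurableSet_uIoc] with s hs
  rw [Set.uIoc_of_le (by norm_num : (0:ℝ) ≤ 1)] at hs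
  rw [Real.norm_eq_abs, Real.norm_eq_abs, abs_of_nonneg (Ki_nonneg k s),
    abs_of_nonneg (by positivity)]
  exact Ki_le le_rfl hk hs

lemma Ei_int {k : ℝ} (hk : k^2 < 1) : IntervalIntegrable (Ei k) volume 0 1 := by
  apply maj_int.mono_fun (Ei_meas k).aestronglyMeasurable
  filter_upwards [ae_restrict_mem measurableSet_uIoc] with s hs
  rw [Set.uIoc_of_le (by norm_num : (0:ℝ) ≤ 1)] at hs
  rw [Real.norm_eq_abs, Real.norm_eq_abs, abs_of_nonneg (Ei_nonneg k s),
    abs_of_nonneg (by positivity)]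
  exact Ei_le hk.le hs

lemma ae_ne_one : ∀ᵐ s : ℝ ∂volume, s ≠ 1 := by
  rw [ae_iff]
  simp only [not_not, setOf_eq_eq_singleton]
  exact Real.volume_singleton

lemma ae_mem_Ico : ∀ᵐ s ∂(volume.restrict (Set.Icc (0:ℝ) 1)), s ∈ Set.Ico (0:ℝ) 1 := by
  filter_upwards [ae_restrict_mem measurableSet_Icc, ae_restrict_of_ae ae_ne_one] with s h1 h2
  exact ⟨h1.1, lt_of_le_of_ne h1.2 h2⟩

lemma one_le_Kc {k : ℝ} (hk : k^2 < 1) : 1 ≤ Kc k := by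
  rw [Kc_eq]
  have h := intervalIntegral.integral_mono_ae_restrict (f := fun _ => (1:ℝ)) (g := Ki k)
      (μ := volume) zero_le_one intervalIntegrable_const (Ki_int hk) ?_
  · simpa using h
  · filter_upwards [ae_mem_Ico] with s hs
    have h1 : (0:ℝ) < 1 - s^2 := by nlinarith [hs.1, hs.2]
    have h2 : (0:ℝ) < 1 - k^2*s^2 := by nlinarith [hs.1, hs.2, sq_nonneg (k*s)]
    rw [Ki]
    apply one_le_one_div (Real.sqrt_pos.2 (by positivity))
    have hup : Real.sqrt ((1 - s^2)*(1 - k^2*s^2)) ≤ Real.sqrt 1 :=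
      Real.sqrt_le_sqrt (by nlinarith [hs.1, hs.2])
    simpa using hup


def Phi (k s t : ℝ) : ℝ := (4*Ei k s - 4*(1-k^2)*Ki k s)*Ki k t + (4*Ki k s)*Ei k t

lemma Phi_closed {k s t : ℝ} (hk : k^2 ≤ 1) (hs : s ∈ Set.Ico 0 1) (ht : t ∈ Set.Ico 0 1) :
    Phi k s t = 4*(1+k^2*(1-s^2-t^2)) /
      (Real.sqrt (1-s^2) * Real.sqrt (1-t^2) * (Real.sqrt (1-k^2*s^2) * Real.sqrt (1-k^2*t^2))) := by
  have hs2 : (0:ℝ) < 1 - s^2 := by nlinarith [hs.1, hs.2]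
  have ht2 : (0:ℝ) < 1 - t^2 := by nlinarith [ht.1, ht.2]
  have hks : (0:ℝ) < 1 - k^2*s^2 := by nlinarith [sq_nonneg k, sq_nonneg (k*s)]
  have hkt : (0:ℝ) < 1 - k^2*t^2 := by nlinarith [sq_nonneg k, sq_nonneg (k*t)]
  have ha : 0 < Real.sqrt (1-s^2) := Real.sqrt_pos.2 hs2
  have hb : 0 < Real.sqrt (1-t^2) := Real.sqrt_pos.2 ht2
  have hc : 0 < Real.sqrt (1-k^2*s^2) := Real.sqrt_pos.2 hks
  have hd : 0 < Real.sqrt (1-k^2*t^2) := Real.sqrt_pos.2 hkt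
  have ha2 : Real.sqrt (1-s^2)^2 = 1-s^2 := Real.sq_sqrt hs2.le
  have hb2 : Real.sqrt (1-t^2)^2 = 1-t^2 := Real.sq_sqrt ht2.le
  have hc2 : Real.sqrt (1-k^2*s^2)^2 = 1-k^2*s^2 := Real.sq_sqrt hks.le
  have hd2 : Real.sqrt (1-k^2*t^2)^2 = 1-k^2*t^2 := Real.sq_sqrt hkt.le
  rw [Phi, Ei, Ei, Ki, Ki, Real.sqrt_div hks.le, Real.sqrt_div hkt.le,
    Real.sqrt_mul hs2.le, Real.sqrt_mul ht2.le]
  have key : (4*(Real.sqrt (1-k^2*s^2)/Real.sqrt (1-s^2)) -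
        4*(1-k^2)*(1/(Real.sqrt (1-s^2)*Real.sqrt (1-k^2*s^2))))*(1/(Real.sqrt (1-t^2)*Real.sqrt (1-k^2*t^2)))
      + (4*(1/(Real.sqrt (1-s^2)*Real.sqrt (1-k^2*s^2))))*(Real.sqrt (1-k^2*t^2)/Real.sqrt (1-t^2))
      = (4*Real.sqrt (1-k^2*s^2)^2 + 4*Real.sqrt (1-k^2*t^2)^2 - 4*(1-k^2)) /
        (Real.sqrt (1-s^2) * Real.sqrt (1-t^2) * (Real.sqrt (1-k^2*s^2) * Real.sqrt (1-k^2*t^2))) := by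
    field_simp
    ring
  rw [key, hc2, hd2]
  congr 1
  ring

lemma Phi_one (k s : ℝ) : Phi k s 1 = 0 := by simp [Phi, Ki_one, Ei_one]

lemma corePoly {u1 u2 a b : ℝ} (h1 : 0 ≤ u1) (h2 : u1 ≤ u2) (h3 : u2 ≤ 1)
    (ha : 0 ≤ a) (ha1 : a ≤ 1) (hb : 0 ≤ b) (hb1 : b ≤ 1) :
    (1+u1*(1-a-b))^2*((1-u2*a)*(1-u2*b)) ≤ (1+u2*(1-a-b))^2*((1-u1*a)*(1-u1*b)) := by
  have h1' : u1 ≤ 1 := h2.trans h3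
  have h0 : 0 ≤ u2 := h1.trans h2
  have hQ00 : (0:ℝ) ≤ 2 - a - b := by linarith
  have hQ10 : (0:ℝ) ≤ 3 - 3*a - 3*b + a^2 + a*b + b^2 := by
    nlinarith [sq_nonneg (1-a), sq_nonneg (1-b), mul_nonneg (by linarith : (0:ℝ) ≤ 1-a) (by linarith : (0:ℝ) ≤ 1-b)]
  have hQ11 : (0:ℝ) ≤ ((1-a)+(1-b))*((1-a)^2+(1-b)^2) := mul_nonneg (by linarith) (by positivity)
  have hQ : (0:ℝ) ≤ 2 - a - b + (u1+u2)*(3 - 3*a - 3*b + a^2 + a*b + b^2 - (2-a-b))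
      + u1*u2*(((1-a)+(1-b))*((1-a)^2+(1-b)^2) - 2*(3 - 3*a - 3*b + a^2 + a*b + b^2) + (2-a-b)) := by
    nlinarith [mul_nonneg (mul_nonneg (by linarith : (0:ℝ) ≤ 1-u1) (by linarith : (0:ℝ) ≤ 1-u2)) hQ00,
      mul_nonneg (mul_nonneg h1 (by linarith : (0:ℝ) ≤ 1-u2)) hQ10,
      mul_nonneg (mul_nonneg (by linarith : (0:ℝ) ≤ 1-u1) h0) hQ10,
      mul_nonneg (mul_nonneg h1 h0) hQ11]
  nlinarith [mul_nonneg (by linarith : (0:ℝ) ≤ u2 - u1) hQ]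

lemma le_of_sq {x y : ℝ} (hy : 0 ≤ y) (h : x^2 ≤ y^2) : x ≤ y := by nlinarith

lemma Phi_le {k₁ k₂ s t : ℝ} (hk₁ : 0 ≤ k₁) (h12 : k₁ ≤ k₂) (hk₂ : k₂ < 1)
    (hs : s ∈ Set.Ico 0 1) (ht : t ∈ Set.Icc 0 1) : Phi k₁ s t ≤ Phi k₂ s t := by
  rcases eq_or_lt_of_le ht.2 with h1 | h1
  · subst h1; simp [Phi_one]
  have ht' : t ∈ Set.Ico 0 1 := ⟨ht.1, h1⟩
  have hk₂' : 0 ≤ k₂ := hk₁.trans h12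
  have hu1 : k₁^2 ≤ k₂^2 := by nlinarith
  have hu2 : k₂^2 < 1 := by nlinarith
  have hu1' : k₁^2 < 1 := lt_of_le_of_lt hu1 hu2
  have hs2 : (0:ℝ) < 1 - s^2 := by nlinarith [hs.1, hs.2]
  have ht2 : (0:ℝ) < 1 - t^2 := by nlinarith [ht'.1, ht'.2]
  have hks1 : (0:ℝ) < 1 - k₁^2*s^2 := by nlinarith [sq_nonneg k₁, sq_nonneg s]
  have hkt1 : (0:ℝ) < 1 - k₁^2*t^2 := by nlinarith [sq_nonneg k₁, sq_nonneg t]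
  have hks2 : (0:ℝ) < 1 - k₂^2*s^2 := by nlinarith [sq_nonneg s]
  have hkt2 : (0:ℝ) < 1 - k₂^2*t^2 := by nlinarith [sq_nonneg t]
  rw [Phi_closed hu1'.le hs ht', Phi_closed hu2.le hs ht']
  have ha : 0 < Real.sqrt (1-s^2) := Real.sqrt_pos.2 hs2
  have hb : 0 < Real.sqrt (1-t^2) := Real.sqrt_pos.2 ht2
  have hc1 : 0 < Real.sqrt (1-k₁^2*s^2) := Real.sqrt_pos.2 hks1
  have hd1 : 0 < Real.sqrt (1-k₁^2*t^2) := Real.sqrt_pos.2 hkt1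
  have hc2 : 0 < Real.sqrt (1-k₂^2*s^2) := Real.sqrt_pos.2 hks2
  have hd2 : 0 < Real.sqrt (1-k₂^2*t^2) := Real.sqrt_pos.2 hkt2
  have ha2 : Real.sqrt (1-s^2)^2 = 1-s^2 := Real.sq_sqrt hs2.le
  have hb2 : Real.sqrt (1-t^2)^2 = 1-t^2 := Real.sq_sqrt ht2.le
  have e1 : Real.sqrt (1-k₁^2*s^2)^2 = 1-k₁^2*s^2 := Real.sq_sqrt hks1.le
  have e2 : Real.sqrt (1-k₁^2*t^2)^2 = 1-k₁^2*t^2 := Real.sq_sqrt hkt1.le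
  have e3 : Real.sqrt (1-k₂^2*s^2)^2 = 1-k₂^2*s^2 := Real.sq_sqrt hks2.le
  have e4 : Real.sqrt (1-k₂^2*t^2)^2 = 1-k₂^2*t^2 := Real.sq_sqrt hkt2.le
  rw [div_le_div_iff₀ (by positivity) (by positivity)]
  have hN1 : (0:ℝ) ≤ 4*(1+k₁^2*(1-s^2-t^2)) := by nlinarith [sq_nonneg k₁]
  apply le_of_sq (mul_nonneg (by nlinarith : (0:ℝ) ≤ 4*(1+k₂^2*(1-s^2-t^2))) (by positivity))
  have core := corePoly (sq_nonneg k₁) hu1 hu2.le (sq_nonneg s) (by nlinarith) (sq_nonneg t) (by nlinarith)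
  calc (4*(1+k₁^2*(1-s^2-t^2)) * (Real.sqrt (1-s^2)*Real.sqrt (1-t^2)*(Real.sqrt (1-k₂^2*s^2)*Real.sqrt (1-k₂^2*t^2))))^2
      = 16*((1-s^2)*(1-t^2)) * ((1+k₁^2*(1-s^2-t^2))^2*((1-k₂^2*s^2)*(1-k₂^2*t^2))) := by
        rw [show (4*(1+k₁^2*(1-s^2-t^2)) * (Real.sqrt (1-s^2)*Real.sqrt (1-t^2)*(Real.sqrt (1-k₂^2*s^2)*Real.sqrt (1-k₂^2*t^2))))^2
          = 16*(1+k₁^2*(1-s^2-t^2))^2 * (Real.sqrt (1-s^2)^2*Real.sqrt (1-t^2)^2*(Real.sqrt (1-k₂^2*s^2)^2*Real.sqrt (1-k₂^2*t^2)^2)) from by ring,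
          ha2, hb2, e3, e4]
        ring
    _ ≤ 16*((1-s^2)*(1-t^2)) * ((1+k₂^2*(1-s^2-t^2))^2*((1-k₁^2*s^2)*(1-k₁^2*t^2))) := by
        apply mul_le_mul_of_nonneg_left core (by nlinarith)
    _ = (4*(1+k₂^2*(1-s^2-t^2)) * (Real.sqrt (1-s^2)*Real.sqrt (1-t^2)*(Real.sqrt (1-k₁^2*s^2)*Real.sqrt (1-k₁^2*t^2))))^2 := by
        rw [show (4*(1+k₂^2*(1-s^2-t^2)) * (Real.sqrt (1-s^2)*Real.sqrt (1-t^2)*(Real.sqrt (1-k₁^2*s^2)*Real.sqrt (1-k₁^2*t^2))))^2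
          = 16*(1+k₂^2*(1-s^2-t^2))^2 * (Real.sqrt (1-s^2)^2*Real.sqrt (1-t^2)^2*(Real.sqrt (1-k₁^2*s^2)^2*Real.sqrt (1-k₁^2*t^2)^2)) from by ring,
          ha2, hb2, e1, e2]
        ring

lemma sqrt_le_one' {x : ℝ} (h : x ≤ 1) : Real.sqrt x ≤ 1 := by
  simpa using Real.sqrt_le_sqrt h

lemma Phi_gap {k₁ k₂ s t : ℝ} (hk₁ : 0 ≤ k₁) (h12 : k₁ ≤ k₂) (hk₂ : k₂ < 1)
    (hs : s ∈ Set.Icc 0 (1/2)) (ht : t ∈ Set.Icc 0 (1/2)) :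
    2*(k₂^2 - k₁^2) ≤ Phi k₂ s t - Phi k₁ s t := by
  have hs' : s ∈ Set.Ico (0:ℝ) 1 := ⟨hs.1, by linarith [hs.2]⟩
  have ht' : t ∈ Set.Ico (0:ℝ) 1 := ⟨ht.1, by linarith [ht.2]⟩
  have hk₂' : 0 ≤ k₂ := hk₁.trans h12
  have hu1 : k₁^2 ≤ k₂^2 := by nlinarith
  have hu2 : k₂^2 < 1 := by nlinarith
  have hu1' : k₁^2 < 1 := lt_of_le_of_lt hu1 hu2
  have hs2 : (0:ℝ) < 1 - s^2 := by nlinarith [hs'.1, hs'.2]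
  have ht2 : (0:ℝ) < 1 - t^2 := by nlinarith [ht'.1, ht'.2]
  have hks1 : (0:ℝ) < 1 - k₁^2*s^2 := by nlinarith [sq_nonneg k₁, sq_nonneg s]
  have hkt1 : (0:ℝ) < 1 - k₁^2*t^2 := by nlinarith [sq_nonneg k₁, sq_nonneg t]
  have hks2 : (0:ℝ) < 1 - k₂^2*s^2 := by nlinarith [sq_nonneg s]
  have hkt2 : (0:ℝ) < 1 - k₂^2*t^2 := by nlinarith [sq_nonneg t]
  rw [Phi_closed hu1'.le hs' ht', Phi_closed hu2.le hs' ht']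
  set A := Real.sqrt (1-s^2) with hA
  set B := Real.sqrt (1-t^2) with hB
  have hD1pos : 0 < A*B*(Real.sqrt (1-k₁^2*s^2)*Real.sqrt (1-k₁^2*t^2)) := by
    apply mul_pos (mul_pos (Real.sqrt_pos.2 hs2) (Real.sqrt_pos.2 ht2))
      (mul_pos (Real.sqrt_pos.2 hks1) (Real.sqrt_pos.2 hkt1))
  have hD2pos : 0 < A*B*(Real.sqrt (1-k₂^2*s^2)*Real.sqrt (1-k₂^2*t^2)) := by
    apply mul_pos (mul_pos (Real.sqrt_pos.2 hs2) (Real.sqrt_pos.2 ht2))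
      (mul_pos (Real.sqrt_pos.2 hks2) (Real.sqrt_pos.2 hkt2))
  have hDle : A*B*(Real.sqrt (1-k₂^2*s^2)*Real.sqrt (1-k₂^2*t^2))
      ≤ A*B*(Real.sqrt (1-k₁^2*s^2)*Real.sqrt (1-k₁^2*t^2)) := by
    have hmm := mul_le_mul (Real.sqrt_le_sqrt (by nlinarith [sq_nonneg s] : 1-k₂^2*s^2 ≤ 1-k₁^2*s^2))
      (Real.sqrt_le_sqrt (by nlinarith [sq_nonneg t] : 1-k₂^2*t^2 ≤ 1-k₁^2*t^2))
      (Real.sqrt_nonneg _) (Real.sqrt_nonneg _)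
    exact mul_le_mul_of_nonneg_left hmm (mul_nonneg (Real.sqrt_nonneg _) (Real.sqrt_nonneg _))
  have hD1le : A*B*(Real.sqrt (1-k₁^2*s^2)*Real.sqrt (1-k₁^2*t^2)) ≤ 1 := by
    have u1 : A ≤ 1 := sqrt_le_one' (by nlinarith)
    have u2 : B ≤ 1 := sqrt_le_one' (by nlinarith)
    have u3 : Real.sqrt (1-k₁^2*s^2) ≤ 1 := sqrt_le_one' (by nlinarith)
    have u4 : Real.sqrt (1-k₁^2*t^2) ≤ 1 := sqrt_le_one' (by nlinarith)
    have := mul_le_one₀ (mul_le_one₀ u1 (Real.sqrt_nonneg _) u2)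
      (mul_nonneg (Real.sqrt_nonneg _) (Real.sqrt_nonneg _))
      (mul_le_one₀ u3 (Real.sqrt_nonneg _) u4)
    exact this
  have hN1 : (0:ℝ) ≤ 4*(1+k₁^2*(1-s^2-t^2)) := by nlinarith [sq_nonneg k₁]
  have hNd : 2*(k₂^2-k₁^2) ≤ 4*(1+k₂^2*(1-s^2-t^2)) - 4*(1+k₁^2*(1-s^2-t^2)) := by
    have hcc : (0:ℝ) ≤ 1 - s^2 - t^2 - 1/2 := by nlinarith [hs.1, hs.2, ht.1, ht.2]
    nlinarith [mul_nonneg (by linarith : (0:ℝ) ≤ k₂^2-k₁^2) hcc]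
  have step1 : 4*(1+k₂^2*(1-s^2-t^2)) / (A*B*(Real.sqrt (1-k₁^2*s^2)*Real.sqrt (1-k₁^2*t^2)))
      ≤ 4*(1+k₂^2*(1-s^2-t^2)) / (A*B*(Real.sqrt (1-k₂^2*s^2)*Real.sqrt (1-k₂^2*t^2))) := by
    apply div_le_div_of_nonneg_left (by nlinarith) hD2pos hDle
  have step2 : 2*(k₂^2-k₁^2) ≤ (4*(1+k₂^2*(1-s^2-t^2)) - 4*(1+k₁^2*(1-s^2-t^2))) /
      (A*B*(Real.sqrt (1-k₁^2*s^2)*Real.sqrt (1-k₁^2*t^2))) := by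
    rw [le_div_iff₀ hD1pos]
    calc 2*(k₂^2-k₁^2) * (A*B*(Real.sqrt (1-k₁^2*s^2)*Real.sqrt (1-k₁^2*t^2)))
        ≤ 2*(k₂^2-k₁^2) * 1 := by
          apply mul_le_mul_of_nonneg_left hD1le (by nlinarith)
      _ ≤ _ := by rw [mul_one]; exact hNd
  rw [sub_div] at step2
  linarith [step2, step1]

def psi (k s : ℝ) : ℝ := (4*Ei k s - 4*(1-k^2)*Ki k s)*Kc k + (4*Ki k s)*Ec k

lemma psi_one (k : ℝ) : psi k 1 = 0 := by simp [psi, Ki_one, Ei_one]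

lemma Phi_int {k s : ℝ} (hk : k^2 < 1) : IntervalIntegrable (fun t => Phi k s t) volume 0 1 :=
  ((Ki_int hk).const_mul _).add ((Ei_int hk).const_mul _)

lemma psi_eq {k s : ℝ} (hk : k^2 < 1) : (∫ t in (0:ℝ)..1, Phi k s t) = psi k s := by
  unfold Phi psi
  rw [intervalIntegral.integral_add ((Ki_int hk).const_mul _) ((Ei_int hk).const_mul _),
    intervalIntegral.integral_const_mul, intervalIntegral.integral_const_mul, ← Kc_eq, ← Ec_eq]

lemma psi_fun_eq (k : ℝ) : (fun s => psi k s) =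
    fun s => (4*Kc k)*Ei k s + (4*Ec k - 4*(1-k^2)*Kc k)*Ki k s := by
  funext s; unfold psi; ring

lemma psi_int {k : ℝ} (hk : k^2 < 1) : IntervalIntegrable (fun s => psi k s) volume 0 1 := by
  rw [psi_fun_eq]
  exact ((Ei_int hk).const_mul _).add ((Ki_int hk).const_mul _)

lemma integral_psi {k : ℝ} (hk : k^2 < 1) :
    (∫ s in (0:ℝ)..1, psi k s) = 8*Ec k*Kc k - 4*(1-k^2)*Kc k^2 := by
  rw [psi_fun_eq,
    intervalIntegral.integral_add ((Ei_int hk).const_mul _) ((Ki_int hk).const_mul _),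
    intervalIntegral.integral_const_mul, intervalIntegral.integral_const_mul, ← Kc_eq, ← Ec_eq]
  ring

lemma psi_mono {k₁ k₂ s : ℝ} (hk₁ : 0 ≤ k₁) (h12 : k₁ ≤ k₂) (hk₂ : k₂ < 1)
    (hs : s ∈ Set.Icc (0:ℝ) 1) : psi k₁ s ≤ psi k₂ s := by
  have hk₂' : 0 ≤ k₂ := hk₁.trans h12
  have hu1 : k₁^2 < 1 := by nlinarith
  have hu2 : k₂^2 < 1 := by nlinarith
  rcases eq_or_lt_of_le hs.2 with h1 | h1
  · subst h1; simp [psi_one]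
  rw [← psi_eq hu1, ← psi_eq hu2]
  exact intervalIntegral.integral_mono_on zero_le_one (Phi_int hu1) (Phi_int hu2)
    (fun t ht => Phi_le hk₁ h12 hk₂ ⟨hs.1, h1⟩ ht)

lemma psi_gap {k₁ k₂ s : ℝ} (hk₁ : 0 ≤ k₁) (h12 : k₁ ≤ k₂) (hk₂ : k₂ < 1)
    (hs : s ∈ Set.Icc (0:ℝ) (1/2)) : k₂^2 - k₁^2 ≤ psi k₂ s - psi k₁ s := by
  have hk₂' : 0 ≤ k₂ := hk₁.trans h12
  have hu1 : k₁^2 < 1 := by nlinarith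
  have hu2 : k₂^2 < 1 := by nlinarith
  have hs' : s ∈ Set.Icc (0:ℝ) 1 := ⟨hs.1, by linarith [hs.2]⟩
  have hs'' : s ∈ Set.Ico (0:ℝ) 1 := ⟨hs.1, by linarith [hs.2]⟩
  rw [← psi_eq hu1, ← psi_eq hu2,
    ← intervalIntegral.integral_sub (Phi_int hu2) (Phi_int hu1)]
  have hint : IntervalIntegrable (fun t => Phi k₂ s t - Phi k₁ s t) volume 0 1 :=
    (Phi_int hu2).sub (Phi_int hu1)
  have i1 : IntervalIntegrable (fun t => Phi k₂ s t - Phi k₁ s t) volume 0 (1/2) :=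
    hint.mono_set (by
      rw [Set.uIcc_of_le (by norm_num : (0:ℝ) ≤ 1/2), Set.uIcc_of_le (by norm_num : (0:ℝ) ≤ 1)]
      exact Set.Icc_subset_Icc le_rfl (by norm_num))
  have i2 : IntervalIntegrable (fun t => Phi k₂ s t - Phi k₁ s t) volume (1/2) 1 :=
    hint.mono_set (by
      rw [Set.uIcc_of_le (by norm_num : (1/2:ℝ) ≤ 1), Set.uIcc_of_le (by norm_num : (0:ℝ) ≤ 1)]
      exact Set.Icc_subset_Icc (by norm_num) le_rfl)
  rw [← intervalIntegral.integral_add_adjacent_intervals i1 i2]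
  have b1 : k₂^2-k₁^2 ≤ ∫ t in (0:ℝ)..(1/2), (Phi k₂ s t - Phi k₁ s t) := by
    have hmono := intervalIntegral.integral_mono_on (by norm_num : (0:ℝ) ≤ 1/2)
      (intervalIntegrable_const (c := 2*(k₂^2-k₁^2))) i1
      (fun t ht => Phi_gap hk₁ h12 hk₂ hs ht)
    rw [intervalIntegral.integral_const, smul_eq_mul] at hmono
    linarith
  have b2 : (0:ℝ) ≤ ∫ t in (1/2:ℝ)..1, (Phi k₂ s t - Phi k₁ s t) := by
    apply intervalIntegral.integral_nonneg (by norm_num)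
    intro t ht
    have := Phi_le hk₁ h12 hk₂ hs'' (⟨by linarith [ht.1], ht.2⟩ : t ∈ Set.Icc (0:ℝ) 1)
    linarith
  linarith

lemma F_strictMono {k₁ k₂ : ℝ} (h0 : 0 < k₁) (h12 : k₁ < k₂) (h2 : k₂ < 1) :
    8*Ec k₁*Kc k₁ - 4*(1-k₁^2)*Kc k₁^2 < 8*Ec k₂*Kc k₂ - 4*(1-k₂^2)*Kc k₂^2 := by
  have hu1 : k₁^2 < 1 := by nlinarith
  have hu2 : k₂^2 < 1 := by nlinarith
  have hΔ : 0 < k₂^2 - k₁^2 := by nlinarith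
  rw [← integral_psi hu1, ← integral_psi hu2]
  have hint : IntervalIntegrable (fun s => psi k₂ s - psi k₁ s) volume 0 1 :=
    (psi_int hu2).sub (psi_int hu1)
  have i1 : IntervalIntegrable (fun s => psi k₂ s - psi k₁ s) volume 0 (1/2) :=
    hint.mono_set (by
      rw [Set.uIcc_of_le (by norm_num : (0:ℝ) ≤ 1/2), Set.uIcc_of_le (by norm_num : (0:ℝ) ≤ 1)]
      exact Set.Icc_subset_Icc le_rfl (by norm_num))
  have i2 : IntervalIntegrable (fun s => psi k₂ s - psi k₁ s) volume (1/2) 1 :=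
    hint.mono_set (by
      rw [Set.uIcc_of_le (by norm_num : (1/2:ℝ) ≤ 1), Set.uIcc_of_le (by norm_num : (0:ℝ) ≤ 1)]
      exact Set.Icc_subset_Icc (by norm_num) le_rfl)
  have key : (1/2)*(k₂^2-k₁^2) ≤ ∫ s in (0:ℝ)..1, (psi k₂ s - psi k₁ s) := by
    rw [← intervalIntegral.integral_add_adjacent_intervals i1 i2]
    have b1 : (1/2)*(k₂^2-k₁^2) ≤ ∫ s in (0:ℝ)..(1/2), (psi k₂ s - psi k₁ s) := by
      have hmono := intervalIntegral.integral_mono_on (by norm_num : (0:ℝ) ≤ 1/2)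
        (intervalIntegrable_const (c := k₂^2-k₁^2)) i1
        (fun s hs => psi_gap h0.le h12.le h2 hs)
      rw [intervalIntegral.integral_const, smul_eq_mul] at hmono
      linarith
    have b2 : (0:ℝ) ≤ ∫ s in (1/2:ℝ)..1, (psi k₂ s - psi k₁ s) := by
      apply intervalIntegral.integral_nonneg (by norm_num)
      intro s hs
      have := psi_mono h0.le h12.le h2 (⟨by linarith [hs.1], hs.2⟩ : s ∈ Set.Icc (0:ℝ) 1)
      linarith
    linarith
  rw [intervalIntegral.integral_sub (psi_int hu2) (psi_int hu1)] at key
  linarith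

lemma one_le_G {k : ℝ} (hk0 : 0 ≤ k) (hk : k^2 < 1) : 1 ≤ 2*Ec k - (1-k^2)*Kc k := by
  have hlin : (∫ s in (0:ℝ)..1, (2*Ei k s - (1-k^2)*Ki k s)) = 2*Ec k - (1-k^2)*Kc k := by
    rw [intervalIntegral.integral_sub ((Ei_int hk).const_mul _) ((Ki_int hk).const_mul _),
      intervalIntegral.integral_const_mul, intervalIntegral.integral_const_mul, ← Kc_eq, ← Ec_eq]
  rw [← hlin]
  have h := intervalIntegral.integral_mono_ae_restrict (f := fun _ => (1:ℝ))
      (g := fun s => 2*Ei k s - (1-k^2)*Ki k s) (μ := volume) zero_le_one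
      intervalIntegrable_const (((Ei_int hk).const_mul _).sub ((Ki_int hk).const_mul _)) ?_
  · simpa using h
  · filter_upwards [ae_mem_Ico] with s hs
    have hs2 : (0:ℝ) < 1 - s^2 := by nlinarith [hs.1, hs.2]
    have hks : (0:ℝ) < 1 - k^2*s^2 := by nlinarith [hs.1, hs.2, sq_nonneg (k*s)]
    have hp : 0 < Real.sqrt (1-s^2) := Real.sqrt_pos.2 hs2
    have hr : 0 < Real.sqrt (1-k^2*s^2) := Real.sqrt_pos.2 hks
    have hp2 : Real.sqrt (1-s^2)^2 = 1-s^2 := Real.sq_sqrt hs2.le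
    have hr2 : Real.sqrt (1-k^2*s^2)^2 = 1-k^2*s^2 := Real.sq_sqrt hks.le
    have hpr : Real.sqrt (1-s^2) ≤ Real.sqrt (1-k^2*s^2) :=
      Real.sqrt_le_sqrt (by nlinarith [sq_nonneg (k*s), sq_nonneg s])
    rw [Ei, Ki, Real.sqrt_div hks.le, Real.sqrt_mul hs2.le]
    have heq : 2*(Real.sqrt (1-k^2*s^2)/Real.sqrt (1-s^2)) -
        (1-k^2)*(1/(Real.sqrt (1-s^2)*Real.sqrt (1-k^2*s^2)))
        = (2*Real.sqrt (1-k^2*s^2)^2 - (1-k^2)) / (Real.sqrt (1-s^2)*Real.sqrt (1-k^2*s^2)) := by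
      field_simp
    rw [heq, le_div_iff₀ (by positivity), one_mul]
    have e1 := mul_le_mul_of_nonneg_right hpr hr.le
    have e2 : Real.sqrt (1-k^2*s^2)*Real.sqrt (1-k^2*s^2) = 1-k^2*s^2 :=
      Real.mul_self_sqrt hks.le
    nlinarith [mul_nonneg (sq_nonneg k) hs2.le]

lemma F_ge_4K {k : ℝ} (hk0 : 0 ≤ k) (hk : k^2 < 1) :
    4*Kc k ≤ 8*Ec k*Kc k - 4*(1-k^2)*Kc k^2 := by
  have h1 := one_le_Kc hk
  have h2 := one_le_G hk0 hk
  have : 8*Ec k*Kc k - 4*(1-k^2)*Kc k^2 = 4*Kc k*(2*Ec k - (1-k^2)*Kc k) := by ring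
  rw [this]
  nlinarith

lemma Kc_zero : Kc 0 = π/2 := by
  have hfun : (fun s : ℝ => 1/Real.sqrt (1-s^2)) = Ki 0 := by
    funext s; simp [Ki]
  have hint : IntervalIntegrable (fun s : ℝ => 1/Real.sqrt (1-s^2)) volume 0 1 := by
    rw [hfun]; exact Ki_int (by norm_num)
  have h := intervalIntegral.integral_eq_sub_of_hasDeriv_right_of_le zero_le_one
    (f := Real.arcsin) (f' := fun s : ℝ => 1/Real.sqrt (1-s^2))
    Real.continuous_arcsin.continuousOn
    (fun x hx => (Real.hasDerivAt_arcsin (by linarith [hx.1] : x ≠ -1)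
      (by linarith [hx.2] : x ≠ 1)).hasDerivWithinAt)
    hint
  rw [Real.arcsin_one, Real.arcsin_zero, sub_zero] at h
  rw [Kc_eq, ← hfun, h]

lemma Ec_zero : Ec 0 = π/2 := by
  rw [← Kc_zero, Ec_eq, Kc_eq]
  apply intervalIntegral.integral_congr
  intro s _
  show Real.sqrt ((1 - (0:ℝ)^2*s^2)/(1-s^2)) = 1/Real.sqrt ((1-s^2)*(1-(0:ℝ)^2*s^2))
  rw [show (1:ℝ) - (0:ℝ)^2*s^2 = 1 by ring, mul_one, one_div, one_div, Real.sqrt_inv]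

lemma Kc_ge {k : ℝ} (hk0 : 0 < k) (hk1 : k < 1) :
    (1/2) * Real.log ((2-k)/(1-k)) ≤ Kc k := by
  have hu : k^2 < 1 := by nlinarith
  have heps : (0:ℝ) < 1 - k := by linarith
  have hI : (∫ s in (0:ℝ)..1, (1/2)*(2-k-s)⁻¹) = (1/2)*Real.log ((2-k)/(1-k)) := by
    rw [intervalIntegral.integral_const_mul]
    have hcomp : (∫ s in (0:ℝ)..1, (2-k-s)⁻¹) = ∫ x in (1-k:ℝ)..(2-k:ℝ), x⁻¹ := by
      have h := intervalIntegral.integral_comp_sub_left (a := (0:ℝ)) (b := 1)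
        (fun x : ℝ => x⁻¹) (2-k)
      rw [show (2:ℝ)-k-1 = 1-k by ring, show (2:ℝ)-k-0 = 2-k by ring] at h
      exact h
    rw [hcomp, integral_inv (by
      rw [Set.uIcc_of_le (by linarith)]
      intro hmem
      exact absurd hmem.1 (by linarith))]
  rw [← hI, Kc_eq]
  have hcont : IntervalIntegrable (fun s : ℝ => (1/2)*(2-k-s)⁻¹) volume 0 1 := by
    apply ContinuousOn.intervalIntegrable
    apply continuousOn_const.mul
    apply ContinuousOn.inv₀ (by fun_prop)
    intro s hs
    rw [Set.uIcc_of_le (by norm_num : (0:ℝ) ≤ 1)] at hs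
    have := hs.2
    intro hzero
    nlinarith [hs.1, hs.2]
  apply intervalIntegral.integral_mono_ae_restrict zero_le_one hcont (Ki_int hu)
  filter_upwards [ae_mem_Ico] with s hs
  have hs2 : (0:ℝ) < 1 - s^2 := by nlinarith [hs.1, hs.2]
  have hks : (0:ℝ) < 1 - k^2*s^2 := by nlinarith [hs.1, hs.2, sq_nonneg (k*s)]
  have hden : (0:ℝ) < 2-k-s := by linarith [hs.2]
  have hsqP : Real.sqrt ((1-s^2)*(1-k^2*s^2)) ≤ 2*(2-k-s) := by
    have hPle : (1-s^2)*(1-k^2*s^2) ≤ (2*(2-k-s))^2 := by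
      have b1 : 1-s^2 ≤ 2*(1-s) := by nlinarith [hs.1]
      have b2 : 1-k^2*s^2 ≤ 4-2*k-2*s := by
        have hpos : (0:ℝ) ≤ 2-k^2*(1+s) := by nlinarith [hs.1, hs.2]
        have h2 : (0:ℝ) ≤ 1-s := by linarith [hs.2]
        nlinarith [mul_nonneg h2 hpos, sq_nonneg (1-k)]
      have c1 : (1-s^2)*(1-k^2*s^2) ≤ (2*(1-s))*(4-2*k-2*s) :=
        mul_le_mul b1 b2 (by nlinarith) (by nlinarith [hs.1])
      have c2 : (2*(1-s))*(4-2*k-2*s) ≤ (4-2*k-2*s)^2 := by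
        nlinarith [mul_nonneg (by linarith [hs.2] : (0:ℝ) ≤ 4-2*k-2*s) (by linarith : (0:ℝ) ≤ 2-2*k)]
      nlinarith [c1, c2]
    calc Real.sqrt ((1-s^2)*(1-k^2*s^2)) ≤ Real.sqrt ((2*(2-k-s))^2) := Real.sqrt_le_sqrt hPle
      _ = 2*(2-k-s) := Real.sqrt_sq (by linarith)
  rw [Ki]
  rw [show (1/2)*(2-k-s)⁻¹ = 1/(2*(2-k-s)) by rw [one_div, ← mul_inv, ← one_div]]
  exact one_div_le_one_div_of_le (Real.sqrt_pos.2 (by positivity)) hsqP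

lemma Kc_contOn : ContinuousOn Kc (Set.Ioo (-1:ℝ) 1) := by
  intro k₀ hk₀
  have habs : |k₀| < 1 := abs_lt.2 ⟨hk₀.1, hk₀.2⟩
  set m : ℝ := (1+|k₀|)/2 with hm
  have hm1 : m < 1 := by rw [hm]; linarith
  have hm0 : |k₀| < m := by rw [hm]; linarith
  have hmm : m^2 < 1 := by nlinarith [abs_nonneg k₀]
  have : ContinuousWithinAt (fun k => ∫ s in (0:ℝ)..1, Ki k s) (Set.Ioo (-1:ℝ) 1) k₀ := by
    apply intervalIntegral.continuousWithinAt_of_dominated_interval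
      (bound := fun s => 1/Real.sqrt (1-m^2) * (1/Real.sqrt (1-s)))
    · exact Filter.Eventually.of_forall fun k => (Ki_meas k).aestronglyMeasurable
    · have hev : ∀ᶠ k in nhdsWithin k₀ (Set.Ioo (-1:ℝ) 1), k ∈ Set.Ioo (-m) m := by
        apply Filter.Eventually.filter_mono nhdsWithin_le_nhds
        exact isOpen_Ioo.eventually_mem (by constructor <;> [linarith [neg_abs_le k₀]; linarith [le_abs_self k₀]])
      filter_upwards [hev] with k hk
      apply Filter.Eventually.of_forall
      intro s hs
      rw [Set.uIoc_of_le (by norm_num : (0:ℝ) ≤ 1)] at hs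
      rw [Real.norm_eq_abs, abs_of_nonneg (Ki_nonneg k s)]
      exact Ki_le (by nlinarith [hk.1, hk.2, abs_nonneg k₀] : k^2 ≤ m^2) hmm hs
    · exact maj_int.const_mul _
    · filter_upwards [ae_ne_one] with s hs1
      intro hs2
      rw [Set.uIoc_of_le (by norm_num : (0:ℝ) ≤ 1)] at hs2
      have hss : s ∈ Set.Ioo (0:ℝ) 1 := ⟨hs2.1, lt_of_le_of_ne hs2.2 hs1⟩
      apply ContinuousAt.continuousWithinAt
      have hpos : (0:ℝ) < (1-s^2)*(1-k₀^2*s^2) := by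
        have h1 : (0:ℝ) < 1-s^2 := by nlinarith [hss.1, hss.2]
        have h2 : k₀^2 ≤ 1 := by nlinarith [hk₀.1, hk₀.2]
        have h3 : (0:ℝ) < 1-k₀^2*s^2 := by nlinarith [hss.1, hss.2, sq_nonneg k₀]
        positivity
      apply ContinuousAt.div continuousAt_const
      · exact (Continuous.sqrt (by continuity)).continuousAt
      · exact ne_of_gt (Real.sqrt_pos.2 hpos)
  exact this

lemma Ec_contOn : ContinuousOn Ec (Set.Ioo (-1:ℝ) 1) := by
  intro k₀ hk₀
  have : ContinuousWithinAt (fun k => ∫ s in (0:ℝ)..1, Ei k s) (Set.Ioo (-1:ℝ) 1) k₀ := by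
    apply intervalIntegral.continuousWithinAt_of_dominated_interval
      (bound := fun s => 1/Real.sqrt (1-s))
    · exact Filter.Eventually.of_forall fun k => (Ei_meas k).aestronglyMeasurable
    · have hev : ∀ᶠ k in nhdsWithin k₀ (Set.Ioo (-1:ℝ) 1), k ∈ Set.Ioo (-1:ℝ) 1 :=
        eventually_mem_nhdsWithin
      filter_upwards [hev] with k hk
      apply Filter.Eventually.of_forall
      intro s hs
      rw [Set.uIoc_of_le (by norm_num : (0:ℝ) ≤ 1)] at hs
      rw [Real.norm_eq_abs, abs_of_nonneg (Ei_nonneg k s)]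
      exact Ei_le (by nlinarith [hk.1, hk.2] : k^2 ≤ 1) hs
    · exact maj_int
    · apply Filter.Eventually.of_forall
      intro s _
      apply ContinuousAt.continuousWithinAt
      apply Continuous.continuousAt
      apply Continuous.sqrt
      apply Continuous.div_const
      continuity
  exact this

lemma F_contOn : ContinuousOn (fun k : ℝ => 8 * Ec k * Kc k - 4 * (1 - k ^ 2) * Kc k ^ 2)
    (Set.Ioo (-1:ℝ) 1) := by
  apply ContinuousOn.sub
  · exact (continuousOn_const.mul Ec_contOn).mul Kc_contOn
  · exact (continuousOn_const.mul (continuousOn_const.sub (continuous_pow 2).continuousOn)).mul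
      (Kc_contOn.pow 2)

lemma F_zero : 8 * Ec 0 * Kc 0 - 4 * (1 - (0:ℝ) ^ 2) * Kc 0 ^ 2 = π^2 := by
  rw [Ec_zero, Kc_zero]; ring

lemma F_tendsto_zero :
    Tendsto (fun k : ℝ => 8 * Ec k * Kc k - 4 * (1 - k ^ 2) * Kc k ^ 2)
      (nhdsWithin 0 (Set.Ioi 0)) (nhds (π ^ 2)) := by
  have hcw : ContinuousWithinAt (fun k : ℝ => 8 * Ec k * Kc k - 4 * (1 - k ^ 2) * Kc k ^ 2)
      (Set.Ioo (-1:ℝ) 1) 0 := F_contOn 0 (by constructor <;> norm_num)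
  have h1 : Tendsto (fun k : ℝ => 8 * Ec k * Kc k - 4 * (1 - k ^ 2) * Kc k ^ 2)
      (nhdsWithin 0 (Set.Ioo (0:ℝ) 1)) (nhds (π ^ 2)) := by
    have := hcw.tendsto
    rw [F_zero] at this
    exact this.mono_left (nhdsWithin_mono _ (fun x hx => ⟨by linarith [hx.1], hx.2⟩))
  rwa [nhdsWithin_Ioo_eq_nhdsGT zero_lt_one] at h1

lemma F_tendsto_top :
    Tendsto (fun k : ℝ => 8 * Ec k * Kc k - 4 * (1 - k ^ 2) * Kc k ^ 2)
      (nhdsWithin 1 (Set.Iio 1)) atTop := by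
  have hlow : ∀ᶠ k in nhdsWithin (1:ℝ) (Set.Iio 1),
      2*Real.log ((1-k)⁻¹) ≤ 8 * Ec k * Kc k - 4 * (1 - k ^ 2) * Kc k ^ 2 := by
    filter_upwards [Ioo_mem_nhdsLT_of_mem (⟨zero_lt_one, le_rfl⟩ : (1:ℝ) ∈ Set.Ioc 0 1)]
      with k hk
    have hk2 : k^2 < 1 := by nlinarith [hk.1, hk.2]
    have h1 := F_ge_4K hk.1.le hk2
    have h2 := Kc_ge hk.1 hk.2
    have h3 : Real.log ((1-k)⁻¹) ≤ Real.log ((2-k)/(1-k)) := by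
      apply Real.log_le_log (by rw [inv_pos]; linarith [hk.2])
      rw [inv_eq_one_div]
      gcongr
      · linarith [hk.2]
      · linarith [hk.2]
    linarith
  apply tendsto_atTop_mono' _ hlow
  have h1 : Tendsto (fun k : ℝ => 1-k) (nhdsWithin 1 (Set.Iio 1)) (nhdsWithin 0 (Set.Ioi 0)) := by
    rw [tendsto_nhdsWithin_iff]
    constructor
    · have hco : Continuous (fun k : ℝ => 1 - k) := continuous_const.sub continuous_id
      have := hco.tendsto (1:ℝ)
      simp only [sub_self] at this
      exact this.mono_left nhdsWithin_le_nhds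
    · exact eventually_mem_nhdsWithin.mono fun k hk => Set.mem_Ioi.2 (sub_pos.2 hk)
  have h3 : Tendsto (fun k : ℝ => Real.log ((1-k)⁻¹)) (nhdsWithin 1 (Set.Iio 1)) atTop :=
    Real.tendsto_log_atTop.comp (tendsto_inv_nhdsGT_zero.comp h1)
  exact h3.const_mul_atTop (by norm_num : (0:ℝ) < 2)

end EllAux

open EllAux in
theorem elliptic_bijection :
    StrictMonoOn (fun k : ℝ => 8 * Ec k * Kc k - 4 * (1 - k ^ 2) * Kc k ^ 2)
      (Set.Ioo 0 1) ∧
    Set.BijOn (fun k : ℝ => 8 * Ec k * Kc k - 4 * (1 - k ^ 2) * Kc k ^ 2)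
      (Set.Ioo 0 1) (Set.Ioi (π ^ 2)) ∧
    Tendsto (fun k : ℝ => 8 * Ec k * Kc k - 4 * (1 - k ^ 2) * Kc k ^ 2)
      (nhdsWithin 0 (Set.Ioi 0)) (nhds (π ^ 2)) ∧
    Tendsto (fun k : ℝ => 8 * Ec k * Kc k - 4 * (1 - k ^ 2) * Kc k ^ 2)
      (nhdsWithin 1 (Set.Iio 1)) atTop := by
  set F : ℝ → ℝ := fun k : ℝ => 8 * Ec k * Kc k - 4 * (1 - k ^ 2) * Kc k ^ 2 with hF
  have hmono : StrictMonoOn F (Set.Ioo (0:ℝ) 1) := by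
    intro k₁ hk₁ k₂ hk₂ h12
    exact F_strictMono hk₁.1 h12 hk₂.2
  refine ⟨hmono, ⟨?_, hmono.injOn, ?_⟩, F_tendsto_zero, F_tendsto_top⟩
  · -- MapsTo
    intro k hk
    have hmid : k/2 ∈ Set.Ioo (0:ℝ) 1 := ⟨half_pos hk.1, by linarith [hk.2]⟩
    have hle : π^2 ≤ F (k/2) := by
      apply le_of_tendsto F_tendsto_zero
      filter_upwards [Ioo_mem_nhdsGT_of_mem
        (⟨le_refl (0:ℝ), half_pos hk.1⟩ : (0:ℝ) ∈ Set.Ico 0 (k/2))] with k' hk'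
      exact (hmono ⟨hk'.1, by linarith [hk'.2, hmid.2]⟩ hmid hk'.2).le
    have hlt : F (k/2) < F k := hmono hmid hk (by linarith [hk.1])
    exact lt_of_le_of_lt hle hlt
  · -- SurjOn
    intro y hy
    have h₁ := (F_tendsto_zero.eventually_lt_const hy).and
      (Ioo_mem_nhdsGT_of_mem (⟨le_refl (0:ℝ), zero_lt_one⟩ : (0:ℝ) ∈ Set.Ico 0 1))
    obtain ⟨k₁, hFk₁, hk₁⟩ := h₁.exists
    have h₂ := (F_tendsto_top.eventually_gt_atTop y).and
      (Ioo_mem_nhdsLT_of_mem (⟨zero_lt_one, le_refl (1:ℝ)⟩ : (1:ℝ) ∈ Set.Ioc 0 1))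
    obtain ⟨k₂, hFk₂, hk₂⟩ := h₂.exists
    have hlt : k₁ < k₂ := by
      by_contra hcon
      push_neg at hcon
      rcases eq_or_lt_of_le hcon with heq | hltc
      · rw [heq] at hFk₂; linarith
      · have := hmono hk₂ hk₁ hltc
        simp only [hF] at this
        linarith
    have hsub : Set.Icc k₁ k₂ ⊆ Set.Ioo (-1:ℝ) 1 :=
      fun x hx => ⟨by linarith [hk₁.1, hx.1], lt_of_le_of_lt hx.2 hk₂.2⟩
    have hIVT := intermediate_value_Ioo hlt.le (F_contOn.mono hsub)
    have hymem : y ∈ Set.Ioo (F k₁) (F k₂) := ⟨hFk₁, hFk₂⟩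
    obtain ⟨x, hx, hxy⟩ := hIVT hymem
    exact ⟨x, ⟨lt_trans hk₁.1 hx.1, lt_trans hx.2 hk₂.2⟩, hxy⟩
end
end

section
/- Let M > 0 and let κ_M be the measure on [0, M] with density u ↦ 1/√u with respect to Lebesgue measure. Then for every x ∈ [0, M), the logarithmic potential of κ_M satisfies U^{κ_M}(x) = ∫₀^M −log|x−u| (1/√u) du = 2√x · log((√M − √x)/(√M + √x)) − 2√M · log(M − x) + 4√M. -/
open MeasureTheory Real Filter Set

noncomputable section

-- log is interval integrable on any interval
lemma il_log_nonneg {c : ℝ} (hc0 : 0 ≤ c) (hc1 : c ≤ 1) :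
    IntervalIntegrable Real.log volume 0 c := by
  refine (IntervalIntegrable.const_mul
    (intervalIntegral.intervalIntegrable_rpow' (r := -(1/2)) (by norm_num)) 2).mono_fun'
      (Real.measurable_log.aestronglyMeasurable) ?_
  rw [uIoc_of_le hc0]
  filter_upwards [MeasureTheory.ae_restrict_mem measurableSet_Ioc] with t ht
  have ht0 : 0 < t := ht.1
  have ht1 : t ≤ 1 := le_trans ht.2 hc1
  set z : ℝ := t ^ (-(1/2) : ℝ) with hz
  have hzpos : 0 < z := Real.rpow_pos_of_pos ht0 _
  have hinv : t⁻¹ = z ^ 2 := by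
    rw [hz, ← Real.rpow_natCast (t ^ (-(1/2):ℝ)) 2, ← Real.rpow_mul ht0.le]
    norm_num [Real.rpow_neg_one]
  have h1 : ‖Real.log t‖ = - Real.log t := by
    rw [Real.norm_eq_abs]
    exact abs_of_nonpos (Real.log_nonpos ht0.le ht1)
  have h2 : - Real.log t = Real.log (z ^ 2) := by
    rw [← hinv, Real.log_inv]
  have h3 : Real.log (z ^ 2) = 2 * Real.log z := by
    rw [Real.log_pow]; push_cast; ring
  have h4 : Real.log z ≤ z := le_trans (Real.log_le_sub_one_of_pos hzpos) (by linarith)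
  calc ‖Real.log t‖ = 2 * Real.log z := by rw [h1, h2, h3]
    _ ≤ 2 * z := by linarith

lemma il_log (a b : ℝ) : IntervalIntegrable Real.log volume a b := by
  suffices h : ∀ c : ℝ, 0 ≤ c → IntervalIntegrable Real.log volume 0 c by
    have h' : ∀ c : ℝ, IntervalIntegrable Real.log volume 0 c := by
      intro c
      rcases le_or_gt 0 c with hc | hc
      · exact h c hc
      · rw [IntervalIntegrable.iff_comp_neg]
        simpa [Real.log_neg_eq_log] using h (-c) (by linarith)
    exact (h' a).symm.trans (h' b)
  intro c hc
  rcases le_or_gt c 1 with h1 | h1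
  · exact il_log_nonneg hc h1
  · exact (il_log_nonneg zero_le_one le_rfl).trans
      (intervalIntegral.intervalIntegrable_log (notMem_uIcc_of_lt zero_lt_one (by linarith)))

lemma il_log_sub (s a b : ℝ) : IntervalIntegrable (fun t => Real.log (t - s)) volume a b := by
  simpa using (il_log (a - s) (b - s)).comp_sub_right s

lemma il_log_add (s a b : ℝ) : IntervalIntegrable (fun t => Real.log (t + s)) volume a b := by
  simpa using (il_log (a + s) (b + s)).comp_add_right s

lemma key_ftc (s m : ℝ) (hs : 0 ≤ s) (hsm : s < m) :
    ∫ t in (0:ℝ)..m, (-2 * Real.log (t - s) + -2 * Real.log (t + s)) =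
      -2*((m - s) * Real.log (m - s) + (m + s) * Real.log (m + s) - 2*m) := by
  have hm : 0 < m := lt_of_le_of_lt hs hsm
  set F : ℝ → ℝ :=
    fun t => -2*((t - s) * Real.log (t - s) + (t + s) * Real.log (t + s) - 2*t) with hF
  have hcont : ContinuousOn F (Icc 0 m) := by
    have c1 : Continuous fun t : ℝ => (t - s) * Real.log (t - s) :=
      Real.continuous_mul_log.comp (continuous_id.sub continuous_const)
    have c2 : Continuous fun t : ℝ => (t + s) * Real.log (t + s) :=
      Real.continuous_mul_log.comp (continuous_id.add continuous_const)
    exact (continuous_const.mul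
      ((c1.add c2).sub (continuous_const.mul continuous_id))).continuousOn
  have hderiv : ∀ t ∈ Ioo 0 m \ ({s} : Set ℝ),
      HasDerivAt F (-2 * Real.log (t - s) + -2 * Real.log (t + s)) t := by
    intro t ht
    obtain ⟨⟨ht0, htm⟩, hts⟩ := ht
    have hts' : t ≠ s := by simpa using hts
    have h1 : t - s ≠ 0 := sub_ne_zero.2 hts'
    have h2 : t + s ≠ 0 := by positivity
    have d1 : HasDerivAt (fun t : ℝ => (t - s) * Real.log (t - s)) (Real.log (t - s) + 1) t := by
      simpa [Function.comp_def] using (Real.hasDerivAt_mul_log h1).comp t ((hasDerivAt_id t).sub_const s)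
    have d2 : HasDerivAt (fun t : ℝ => (t + s) * Real.log (t + s)) (Real.log (t + s) + 1) t := by
      simpa [Function.comp_def] using (Real.hasDerivAt_mul_log h2).comp t ((hasDerivAt_id t).add_const s)
    have d3 := ((d1.add d2).sub ((hasDerivAt_id t).const_mul (2:ℝ))).const_mul (-2:ℝ)
    exact d3.congr_deriv (by ring)
  have hint : IntervalIntegrable
      (fun t => -2 * Real.log (t - s) + -2 * Real.log (t + s)) volume 0 m :=
    ((il_log_sub s 0 m).const_mul (-2)).add ((il_log_add s 0 m).const_mul (-2))
  rw [MeasureTheory.integral_eq_of_hasDerivAt_off_countable_of_le F _ hm.le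
    (Set.countable_singleton s) hcont hderiv hint]
  simp only [hF]
  rw [zero_sub, zero_add, Real.log_neg_eq_log]
  ring

theorem potential_of_kappa (M : ℝ) (hM : 0 < M) (x : ℝ) (hx : x ∈ Set.Ico 0 M) :
    (∫ u in (0:ℝ)..M, -Real.log |x - u| / Real.sqrt u)
      = 2 * Real.sqrt x * Real.log ((Real.sqrt M - Real.sqrt x) / (Real.sqrt M + Real.sqrt x))
        - 2 * Real.sqrt M * Real.log (M - x) + 4 * Real.sqrt M := by
  obtain ⟨hx0, hxM⟩ := hx
  set s := Real.sqrt x with hsdef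
  set m := Real.sqrt M with hmdef
  have hs : 0 ≤ s := Real.sqrt_nonneg x
  have hm : 0 < m := Real.sqrt_pos.2 hM
  have hsm : s < m := Real.sqrt_lt_sqrt hx0 hxM
  have hs2 : s ^ 2 = x := Real.sq_sqrt hx0
  have hm2 : m ^ 2 = M := Real.sq_sqrt hM.le
  set g : ℝ → ℝ := fun u => -Real.log |x - u| / Real.sqrt u with hg
  have himg : (fun t : ℝ => t ^ 2) '' Ioo 0 m = Ioo 0 M := by
    ext u
    constructor
    · rintro ⟨t, ⟨ht0, htm⟩, rfl⟩
      refine ⟨pow_pos ht0 2, ?_⟩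
      calc t ^ 2 < m ^ 2 := by nlinarith
        _ = M := hm2
    · rintro ⟨hu0, huM⟩
      refine ⟨Real.sqrt u, ⟨Real.sqrt_pos.2 hu0, ?_⟩, Real.sq_sqrt hu0.le⟩
      rw [hmdef]
      exact Real.sqrt_lt_sqrt hu0.le huM
  have hderiv : ∀ t ∈ Ioo (0:ℝ) m,
      HasDerivWithinAt (fun t : ℝ => t ^ 2) (2 * t) (Ioo 0 m) t := by
    intro t ht
    simpa using (hasDerivAt_pow 2 t).hasDerivWithinAt
  have hinj : InjOn (fun t : ℝ => t ^ 2) (Ioo 0 m) := by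
    intro a ha b hb hab
    simp only at hab
    have h0 : (a - b) * (a + b) = 0 := by linear_combination hab
    rcases mul_eq_zero.1 h0 with h | h
    · linarith
    · exfalso; have := ha.1; have := hb.1; linarith
  have hchg := MeasureTheory.integral_image_eq_integral_abs_deriv_smul
    measurableSet_Ioo hderiv hinj g
  rw [himg] at hchg
  have hae : ∀ᵐ t ∂(volume : Measure ℝ), t ≠ s := by
    rw [ae_iff]
    simp only [not_not, setOf_eq_eq_singleton]
    exact measure_singleton s
  have hcongr : (∫ t in Ioo (0:ℝ) m, |2 * t| • g (t ^ 2)) =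
      ∫ t in Ioo (0:ℝ) m, (-2 * Real.log (t - s) + -2 * Real.log (t + s)) := by
    refine MeasureTheory.setIntegral_congr_ae measurableSet_Ioo ?_
    filter_upwards [hae] with t hts ht
    obtain ⟨ht0, htm⟩ := ht
    have hsq : Real.sqrt (t ^ 2) = t := Real.sqrt_sq ht0.le
    have hxs : x - t ^ 2 = (s - t) * (s + t) := by rw [← hs2]; ring
    have hts' : s - t ≠ 0 := sub_ne_zero.2 (Ne.symm hts)
    have hst : 0 < s + t := by positivity
    have habs : |x - t ^ 2| = |s - t| * (s + t) := by
      rw [hxs, abs_mul, abs_of_pos hst]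
    have hlog : Real.log |x - t ^ 2| = Real.log (t - s) + Real.log (t + s) := by
      rw [habs, Real.log_mul (abs_ne_zero.2 hts') (ne_of_gt hst), abs_sub_comm, Real.log_abs,
        add_comm s t]
    rw [hg]
    simp only
    rw [hsq, hlog, abs_of_pos (by positivity : (0:ℝ) < 2 * t), smul_eq_mul]
    field_simp
    ring
  calc (∫ u in (0:ℝ)..M, -Real.log |x - u| / Real.sqrt u)
      = ∫ u in Ioo (0:ℝ) M, g u := by
        rw [intervalIntegral.integral_of_le hM.le, MeasureTheory.integral_Ioc_eq_integral_Ioo]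
    _ = ∫ t in Ioo (0:ℝ) m, |2 * t| • g (t ^ 2) := hchg
    _ = ∫ t in Ioo (0:ℝ) m, (-2 * Real.log (t - s) + -2 * Real.log (t + s)) := hcongr
    _ = ∫ t in (0:ℝ)..m, (-2 * Real.log (t - s) + -2 * Real.log (t + s)) := by
        rw [intervalIntegral.integral_of_le hm.le, MeasureTheory.integral_Ioc_eq_integral_Ioo]
    _ = -2*((m - s) * Real.log (m - s) + (m + s) * Real.log (m + s) - 2*m) :=
        key_ftc s m hs hsm
    _ = 2 * s * Real.log ((m - s) / (m + s)) - 2 * m * Real.log (M - x) + 4 * m := by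
        have h1 : M - x = (m - s) * (m + s) := by rw [← hs2, ← hm2]; ring
        have hms : (0:ℝ) < m - s := sub_pos.2 hsm
        have hps : (0:ℝ) < m + s := by positivity
        rw [h1, Real.log_mul (ne_of_gt hms) (ne_of_gt hps),
          Real.log_div (ne_of_gt hms) (ne_of_gt hps)]
        ring
end
end

section
/- Let 0 < a < b and let w(x) = |x|/(π√((b²−x²)(x²−a²))) for x ∈ J(a,b) = [−b,−a] ∪ [a,b] and w(x) = 0 otherwise. Then ∫_ℝ w(x) dx = 1, ∫_ℝ x² w(x) dx = (a²+b²)/2, and for every real z with z > b, one has ∫_{J(a,b)} w(x)/(z−x) dx = z/√((z²−a²)(z²−b²)). -/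
open MeasureTheory Real Filter Set

noncomputable section

/-- The set `J(a,b) = [−b,−a] ∪ [a,b]`. -/
def Jset (a b : ℝ) : Set ℝ := Set.Icc (-b) (-a) ∪ Set.Icc a b

/-- The density of the equilibrium measure of `J(a,b)`:
`w(x) = |x|/(π√((b²−x²)(x²−a²)))` on `J(a,b)` and `0` elsewhere. -/
def eqDensity (a b : ℝ) : ℝ → ℝ :=
  (Jset a b).indicator fun x => |x| / (π * Real.sqrt ((b ^ 2 - x ^ 2) * (x ^ 2 - a ^ 2)))

namespace EqAux

variable {a b : ℝ}

lemma P_pos (ha : 0 < a) {x : ℝ} (hx : x ∈ Set.Ioo a b) :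
    0 < (b ^ 2 - x ^ 2) * (x ^ 2 - a ^ 2) := by
  obtain ⟨h1, h2⟩ := hx
  have hx0 : 0 < x := ha.trans h1
  have hb2 : 0 < b ^ 2 - x ^ 2 := by nlinarith [mul_pos (sub_pos.2 h2) (show (0:ℝ) < b + x by linarith)]
  have ha2 : 0 < x ^ 2 - a ^ 2 := by nlinarith [mul_pos (sub_pos.2 h1) (show (0:ℝ) < x + a by linarith)]
  exact mul_pos hb2 ha2

lemma hasDerivAt_arcsinPart (ha : 0 < a) (hab : a < b) {x : ℝ} (hx : x ∈ Set.Ioo a b) :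
    HasDerivAt (fun t => Real.arcsin ((2 * t ^ 2 - a ^ 2 - b ^ 2) / (b ^ 2 - a ^ 2)))
      (2 * x / Real.sqrt ((b ^ 2 - x ^ 2) * (x ^ 2 - a ^ 2))) x := by
  have hP : 0 < (b ^ 2 - x ^ 2) * (x ^ 2 - a ^ 2) := P_pos ha hx
  have hS : 0 < Real.sqrt ((b ^ 2 - x ^ 2) * (x ^ 2 - a ^ 2)) := Real.sqrt_pos.2 hP
  have hD : 0 < b ^ 2 - a ^ 2 := by nlinarith [mul_pos (sub_pos.2 hab) (show (0:ℝ) < b + a by linarith)]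
  have hy : HasDerivAt (fun t : ℝ => (2 * t ^ 2 - a ^ 2 - b ^ 2) / (b ^ 2 - a ^ 2))
      (4 * x / (b ^ 2 - a ^ 2)) x := by
    have h1 : HasDerivAt (fun t : ℝ => 2 * t ^ 2 - a ^ 2 - b ^ 2) (4 * x) x := by
      have h0 := ((hasDerivAt_pow 2 x).const_mul (2:ℝ)).sub_const (a ^ 2)
      have h0' := h0.sub_const (b ^ 2)
      refine h0'.congr_deriv (Eq.symm ?_)
      ring
    exact h1.div_const _
  have hsq : 1 - ((2 * x ^ 2 - a ^ 2 - b ^ 2) / (b ^ 2 - a ^ 2)) ^ 2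
      = (2 * Real.sqrt ((b ^ 2 - x ^ 2) * (x ^ 2 - a ^ 2)) / (b ^ 2 - a ^ 2)) ^ 2 := by
    rw [div_pow, div_pow, mul_pow, Real.sq_sqrt hP.le]
    field_simp
    ring
  have hcpos : 0 < 2 * Real.sqrt ((b ^ 2 - x ^ 2) * (x ^ 2 - a ^ 2)) / (b ^ 2 - a ^ 2) := by positivity
  have hlt : ((2 * x ^ 2 - a ^ 2 - b ^ 2) / (b ^ 2 - a ^ 2)) ^ 2 < 1 := by
    nlinarith [hsq, pow_pos hcpos 2]
  have hne1 : (2 * x ^ 2 - a ^ 2 - b ^ 2) / (b ^ 2 - a ^ 2) ≠ -1 := by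
    intro h; rw [h] at hlt; norm_num at hlt
  have hne2 : (2 * x ^ 2 - a ^ 2 - b ^ 2) / (b ^ 2 - a ^ 2) ≠ 1 := by
    intro h; rw [h] at hlt; norm_num at hlt
  have hc := (Real.hasDerivAt_arcsin hne1 hne2).comp x hy
  have hc' : HasDerivAt (fun t => Real.arcsin ((2 * t ^ 2 - a ^ 2 - b ^ 2) / (b ^ 2 - a ^ 2)))
      (1 / Real.sqrt (1 - ((2 * x ^ 2 - a ^ 2 - b ^ 2) / (b ^ 2 - a ^ 2)) ^ 2) * (4 * x / (b ^ 2 - a ^ 2))) x := hc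
  convert hc' using 1
  rw [hsq, Real.sqrt_sq (by positivity)]
  field_simp
  ring


lemma hasDerivAt_sqrtP (ha : 0 < a) {x : ℝ} (hx : x ∈ Set.Ioo a b) :
    HasDerivAt (fun t => Real.sqrt ((b ^ 2 - t ^ 2) * (t ^ 2 - a ^ 2)))
      ((x * (a ^ 2 + b ^ 2) - 2 * x ^ 3) / Real.sqrt ((b ^ 2 - x ^ 2) * (x ^ 2 - a ^ 2))) x := by
  have hP : 0 < (b ^ 2 - x ^ 2) * (x ^ 2 - a ^ 2) := P_pos ha hx
  have hS : 0 < Real.sqrt ((b ^ 2 - x ^ 2) * (x ^ 2 - a ^ 2)) := Real.sqrt_pos.2 hP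
  have hp : HasDerivAt (fun t : ℝ => (b ^ 2 - t ^ 2) * (t ^ 2 - a ^ 2))
      (2 * x * (a ^ 2 + b ^ 2) - 4 * x ^ 3) x := by
    have h1 : HasDerivAt (fun t : ℝ => b ^ 2 - t ^ 2) (-(2 * x)) x := by
      have := (hasDerivAt_pow 2 x).const_sub (b ^ 2)
      refine this.congr_deriv (Eq.symm ?_); push_cast; ring
    have h2 : HasDerivAt (fun t : ℝ => t ^ 2 - a ^ 2) (2 * x) x := by
      have := (hasDerivAt_pow 2 x).sub_const (a ^ 2)
      refine this.congr_deriv (Eq.symm ?_); push_cast; ring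
    have := h1.mul h2
    refine this.congr_deriv (Eq.symm ?_); ring
  have := (Real.hasDerivAt_sqrt hP.ne').comp x hp
  refine this.congr_deriv (Eq.symm ?_)
  field_simp
  ring

lemma hasDerivAt_F2 (ha : 0 < a) (hab : a < b) {x : ℝ} (hx : x ∈ Set.Ioo a b) :
    HasDerivAt (fun t => (-Real.sqrt ((b ^ 2 - t ^ 2) * (t ^ 2 - a ^ 2))
        + (a ^ 2 + b ^ 2) / 2 * Real.arcsin ((2 * t ^ 2 - a ^ 2 - b ^ 2) / (b ^ 2 - a ^ 2))) / 2)
      (x ^ 3 / Real.sqrt ((b ^ 2 - x ^ 2) * (x ^ 2 - a ^ 2))) x := by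
  have hP : 0 < (b ^ 2 - x ^ 2) * (x ^ 2 - a ^ 2) := P_pos ha hx
  have hS : 0 < Real.sqrt ((b ^ 2 - x ^ 2) * (x ^ 2 - a ^ 2)) := Real.sqrt_pos.2 hP
  have h1 := (hasDerivAt_sqrtP ha hx).neg
  have h2 := (hasDerivAt_arcsinPart ha hab hx).const_mul ((a ^ 2 + b ^ 2) / 2)
  have h3 := (h1.add h2).div_const 2
  refine h3.congr_deriv (Eq.symm ?_)
  field_simp
  ring


lemma hasDerivAt_F3 (ha : 0 < a) (hab : a < b) {z : ℝ} (hz : b < z) {x : ℝ} (hx : x ∈ Set.Ioo a b) :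
    HasDerivAt (fun t => z * Real.arcsin (((2 * z ^ 2 - a ^ 2 - b ^ 2) * t ^ 2
          - (a ^ 2 + b ^ 2) * z ^ 2 + 2 * a ^ 2 * b ^ 2)
        / ((b ^ 2 - a ^ 2) * (z ^ 2 - t ^ 2))) / Real.sqrt ((z ^ 2 - a ^ 2) * (z ^ 2 - b ^ 2)))
      (2 * z * x / ((z ^ 2 - x ^ 2) * Real.sqrt ((b ^ 2 - x ^ 2) * (x ^ 2 - a ^ 2)))) x := by
  have hP : 0 < (b ^ 2 - x ^ 2) * (x ^ 2 - a ^ 2) := P_pos ha hx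
  have hS : 0 < Real.sqrt ((b ^ 2 - x ^ 2) * (x ^ 2 - a ^ 2)) := Real.sqrt_pos.2 hP
  have hx0 : 0 < x := ha.trans hx.1
  have hb0 : 0 < b := ha.trans hab
  have hza : 0 < z ^ 2 - a ^ 2 := by nlinarith
  have hzb : 0 < z ^ 2 - b ^ 2 := by nlinarith
  have hzx : 0 < z ^ 2 - x ^ 2 := by nlinarith [hx.1, hx.2]
  have hD : 0 < b ^ 2 - a ^ 2 := by nlinarith
  have hR : 0 < Real.sqrt ((z ^ 2 - a ^ 2) * (z ^ 2 - b ^ 2)) := Real.sqrt_pos.2 (mul_pos hza hzb)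
  have hR2 : Real.sqrt ((z ^ 2 - a ^ 2) * (z ^ 2 - b ^ 2)) ^ 2 = (z ^ 2 - a ^ 2) * (z ^ 2 - b ^ 2) :=
    Real.sq_sqrt (mul_pos hza hzb).le
  have hMne : (b ^ 2 - a ^ 2) * (z ^ 2 - x ^ 2) ≠ 0 := (mul_pos hD hzx).ne'
  have hN : HasDerivAt (fun t : ℝ => (2 * z ^ 2 - a ^ 2 - b ^ 2) * t ^ 2
      - (a ^ 2 + b ^ 2) * z ^ 2 + 2 * a ^ 2 * b ^ 2) (2 * (2 * z ^ 2 - a ^ 2 - b ^ 2) * x) x := by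
    have h0 := (((hasDerivAt_pow 2 x).const_mul (2 * z ^ 2 - a ^ 2 - b ^ 2)).sub_const
      ((a ^ 2 + b ^ 2) * z ^ 2)).add_const (2 * a ^ 2 * b ^ 2)
    refine h0.congr_deriv (Eq.symm ?_); push_cast; ring
  have hMd : HasDerivAt (fun t : ℝ => (b ^ 2 - a ^ 2) * (z ^ 2 - t ^ 2))
      (-(2 * (b ^ 2 - a ^ 2) * x)) x := by
    have h1 : HasDerivAt (fun t : ℝ => z ^ 2 - t ^ 2) (-(2 * x)) x := by
      have := (hasDerivAt_pow 2 x).const_sub (z ^ 2)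
      refine this.congr_deriv (Eq.symm ?_); push_cast; ring
    have := h1.const_mul (b ^ 2 - a ^ 2)
    refine this.congr_deriv (Eq.symm ?_); ring
  have hg := hN.div hMd hMne
  set N : ℝ := (2 * z ^ 2 - a ^ 2 - b ^ 2) * x ^ 2 - (a ^ 2 + b ^ 2) * z ^ 2 + 2 * a ^ 2 * b ^ 2 with hNdef
  set M : ℝ := (b ^ 2 - a ^ 2) * (z ^ 2 - x ^ 2) with hMdef
  have hMpos : 0 < M := mul_pos hD hzx
  have hsq : 1 - (N / M) ^ 2
      = (2 * Real.sqrt ((z ^ 2 - a ^ 2) * (z ^ 2 - b ^ 2))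
          * Real.sqrt ((b ^ 2 - x ^ 2) * (x ^ 2 - a ^ 2)) / M) ^ 2 := by
    simp only [div_pow, mul_pow, hR2, Real.sq_sqrt hP.le]
    field_simp
    ring
  have hcpos : 0 < 2 * Real.sqrt ((z ^ 2 - a ^ 2) * (z ^ 2 - b ^ 2))
      * Real.sqrt ((b ^ 2 - x ^ 2) * (x ^ 2 - a ^ 2)) / M := by positivity
  have hlt : (N / M) ^ 2 < 1 := by nlinarith [hsq, pow_pos hcpos 2]
  have hne1 : N / M ≠ -1 := by intro h; rw [h] at hlt; norm_num at hlt
  have hne2 : N / M ≠ 1 := by intro h; rw [h] at hlt; norm_num at hlt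
  have harc := (Real.hasDerivAt_arcsin hne1 hne2).comp x hg
  have hfinal := (harc.const_mul z).div_const (Real.sqrt ((z ^ 2 - a ^ 2) * (z ^ 2 - b ^ 2)))
  refine hfinal.congr_deriv (Eq.symm ?_)
  rw [hsq, Real.sqrt_sq hcpos.le]
  have hnum : 2 * (2 * z ^ 2 - a ^ 2 - b ^ 2) * x * M - N * -(2 * (b ^ 2 - a ^ 2) * x)
      = 4 * (b ^ 2 - a ^ 2) * x * ((z ^ 2 - a ^ 2) * (z ^ 2 - b ^ 2)) := by
    rw [hMdef, hNdef]; ring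
  rw [hnum]
  have hR2' : Real.sqrt ((z ^ 2 - a ^ 2) * (z ^ 2 - b ^ 2))
      * Real.sqrt ((z ^ 2 - a ^ 2) * (z ^ 2 - b ^ 2)) = (z ^ 2 - a ^ 2) * (z ^ 2 - b ^ 2) :=
    Real.mul_self_sqrt (mul_pos hza hzb).le
  set R := Real.sqrt ((z ^ 2 - a ^ 2) * (z ^ 2 - b ^ 2)) with hRdef
  set S := Real.sqrt ((b ^ 2 - x ^ 2) * (x ^ 2 - a ^ 2)) with hSdef
  field_simp
  rw [hMdef]
  linear_combination (4 * z * ((b ^ 2 - a ^ 2) * (z ^ 2 - x ^ 2))) * hR2'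


lemma contInner (a b : ℝ) : Continuous (fun t : ℝ => (2 * t ^ 2 - a ^ 2 - b ^ 2) / (b ^ 2 - a ^ 2)) := by
  fun_prop

lemma contF1 (a b : ℝ) :
    Continuous (fun t : ℝ => Real.arcsin ((2 * t ^ 2 - a ^ 2 - b ^ 2) / (b ^ 2 - a ^ 2)) / 2) :=
  (Real.continuous_arcsin.comp (contInner a b)).div_const 2

lemma contF2 (a b : ℝ) :
    Continuous (fun t : ℝ => (-Real.sqrt ((b ^ 2 - t ^ 2) * (t ^ 2 - a ^ 2))
        + (a ^ 2 + b ^ 2) / 2 * Real.arcsin ((2 * t ^ 2 - a ^ 2 - b ^ 2) / (b ^ 2 - a ^ 2))) / 2) := by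
  have h1 : Continuous (fun t : ℝ => (b ^ 2 - t ^ 2) * (t ^ 2 - a ^ 2)) := by fun_prop
  have h2 : Continuous (fun t : ℝ => Real.sqrt ((b ^ 2 - t ^ 2) * (t ^ 2 - a ^ 2))) :=
    Real.continuous_sqrt.comp h1
  have h3 : Continuous (fun t : ℝ => Real.arcsin ((2 * t ^ 2 - a ^ 2 - b ^ 2) / (b ^ 2 - a ^ 2))) :=
    Real.continuous_arcsin.comp (contInner a b)
  exact (h2.neg.add (continuous_const.mul h3)).div_const 2

lemma contF3 (ha : 0 < a) (hab : a < b) {z : ℝ} (hz : b < z) :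
    ContinuousOn (fun t => z * Real.arcsin (((2 * z ^ 2 - a ^ 2 - b ^ 2) * t ^ 2
          - (a ^ 2 + b ^ 2) * z ^ 2 + 2 * a ^ 2 * b ^ 2)
        / ((b ^ 2 - a ^ 2) * (z ^ 2 - t ^ 2))) / Real.sqrt ((z ^ 2 - a ^ 2) * (z ^ 2 - b ^ 2)))
      (Set.Icc a b) := by
  have hb0 : 0 < b := ha.trans hab
  have hD : 0 < b ^ 2 - a ^ 2 := by nlinarith
  have hMne : ∀ t ∈ Set.Icc a b, (b ^ 2 - a ^ 2) * (z ^ 2 - t ^ 2) ≠ 0 := by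
    intro t ht
    have h2 : 0 < z ^ 2 - t ^ 2 := by nlinarith [ht.1, ht.2]
    exact (mul_pos hD h2).ne'
  have hq : ContinuousOn (fun t => ((2 * z ^ 2 - a ^ 2 - b ^ 2) * t ^ 2
        - (a ^ 2 + b ^ 2) * z ^ 2 + 2 * a ^ 2 * b ^ 2)
      / ((b ^ 2 - a ^ 2) * (z ^ 2 - t ^ 2))) (Set.Icc a b) :=
    ContinuousOn.div (by fun_prop) (by fun_prop) hMne
  have h3 : ContinuousOn (fun t => Real.arcsin (((2 * z ^ 2 - a ^ 2 - b ^ 2) * t ^ 2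
        - (a ^ 2 + b ^ 2) * z ^ 2 + 2 * a ^ 2 * b ^ 2)
      / ((b ^ 2 - a ^ 2) * (z ^ 2 - t ^ 2)))) (Set.Icc a b) :=
    Real.continuous_arcsin.comp_continuousOn hq
  exact (h3.const_smul z).div_const _

lemma intervalIntegrable1 (ha : 0 < a) (hab : a < b) :
    IntervalIntegrable (fun x => x / Real.sqrt ((b ^ 2 - x ^ 2) * (x ^ 2 - a ^ 2))) volume a b := by
  apply intervalIntegral.intervalIntegrable_deriv_of_nonneg
    (g := fun t => Real.arcsin ((2 * t ^ 2 - a ^ 2 - b ^ 2) / (b ^ 2 - a ^ 2)) / 2)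
  · exact (contF1 a b).continuousOn
  · rw [min_eq_left hab.le, max_eq_right hab.le]
    intro x hx
    have h := (hasDerivAt_arcsinPart ha hab hx).div_const 2
    refine h.congr_deriv (Eq.symm ?_)
    ring
  · rw [min_eq_left hab.le, max_eq_right hab.le]
    intro x hx
    exact div_nonneg (ha.trans hx.1).le (Real.sqrt_nonneg _)

lemma intervalIntegrable2 (ha : 0 < a) (hab : a < b) :
    IntervalIntegrable (fun x => x ^ 3 / Real.sqrt ((b ^ 2 - x ^ 2) * (x ^ 2 - a ^ 2)))
      volume a b := by
  apply intervalIntegral.intervalIntegrable_deriv_of_nonneg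
    (g := fun t => (-Real.sqrt ((b ^ 2 - t ^ 2) * (t ^ 2 - a ^ 2))
        + (a ^ 2 + b ^ 2) / 2 * Real.arcsin ((2 * t ^ 2 - a ^ 2 - b ^ 2) / (b ^ 2 - a ^ 2))) / 2)
  · exact (contF2 a b).continuousOn
  · rw [min_eq_left hab.le, max_eq_right hab.le]
    exact fun x hx => hasDerivAt_F2 ha hab hx
  · rw [min_eq_left hab.le, max_eq_right hab.le]
    intro x hx
    exact div_nonneg (pow_nonneg (ha.trans hx.1).le 3) (Real.sqrt_nonneg _)

lemma intervalIntegrable3 (ha : 0 < a) (hab : a < b) {z : ℝ} (hz : b < z) :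
    IntervalIntegrable (fun x => 2 * z * x
      / ((z ^ 2 - x ^ 2) * Real.sqrt ((b ^ 2 - x ^ 2) * (x ^ 2 - a ^ 2)))) volume a b := by
  have hb0 : 0 < b := ha.trans hab
  have hz0 : 0 < z := hb0.trans hz
  have hMne : ∀ t ∈ Set.Icc a b, (b ^ 2 - a ^ 2) * (z ^ 2 - t ^ 2) ≠ 0 := by
    intro t ht
    have h1 : 0 < b ^ 2 - a ^ 2 := by nlinarith
    have h2 : 0 < z ^ 2 - t ^ 2 := by nlinarith [ht.1, ht.2]
    exact (mul_pos h1 h2).ne'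
  apply intervalIntegral.intervalIntegrable_deriv_of_nonneg
    (g := fun t => z * Real.arcsin (((2 * z ^ 2 - a ^ 2 - b ^ 2) * t ^ 2
          - (a ^ 2 + b ^ 2) * z ^ 2 + 2 * a ^ 2 * b ^ 2)
        / ((b ^ 2 - a ^ 2) * (z ^ 2 - t ^ 2))) / Real.sqrt ((z ^ 2 - a ^ 2) * (z ^ 2 - b ^ 2)))
  · rw [uIcc_of_le hab.le]
    exact contF3 ha hab hz
  · rw [min_eq_left hab.le, max_eq_right hab.le]
    exact fun x hx => hasDerivAt_F3 ha hab hz hx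
  · rw [min_eq_left hab.le, max_eq_right hab.le]
    intro x hx
    have h2 : (0:ℝ) ≤ z ^ 2 - x ^ 2 := by nlinarith [hx.1, hx.2]
    have h3 : (0:ℝ) ≤ 2 * z * x := by nlinarith [mul_pos hz0 (ha.trans hx.1)]
    exact div_nonneg h3 (mul_nonneg h2 (Real.sqrt_nonneg _))

lemma key1 (ha : 0 < a) (hab : a < b) :
    ∫ x in a..b, x / Real.sqrt ((b ^ 2 - x ^ 2) * (x ^ 2 - a ^ 2)) = π / 2 := by
  have hD : 0 < b ^ 2 - a ^ 2 := by nlinarith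
  rw [intervalIntegral.integral_eq_sub_of_hasDerivAt_of_le hab.le
    (contF1 a b).continuousOn
    (fun x hx => by
      have h := (hasDerivAt_arcsinPart ha hab hx).div_const 2
      refine h.congr_deriv (Eq.symm ?_); ring)
    (intervalIntegrable1 ha hab)]
  have hb' : (2 * b ^ 2 - a ^ 2 - b ^ 2) / (b ^ 2 - a ^ 2) = 1 := by
    rw [div_eq_one_iff_eq hD.ne']; ring
  have ha' : (2 * a ^ 2 - a ^ 2 - b ^ 2) / (b ^ 2 - a ^ 2) = -1 := by
    rw [div_eq_iff hD.ne']; ring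
  rw [hb', ha', Real.arcsin_one, Real.arcsin_neg_one]
  ring

lemma key2 (ha : 0 < a) (hab : a < b) :
    ∫ x in a..b, x ^ 3 / Real.sqrt ((b ^ 2 - x ^ 2) * (x ^ 2 - a ^ 2))
      = π * (a ^ 2 + b ^ 2) / 4 := by
  have hD : 0 < b ^ 2 - a ^ 2 := by nlinarith
  rw [intervalIntegral.integral_eq_sub_of_hasDerivAt_of_le hab.le
    (contF2 a b).continuousOn
    (fun x hx => hasDerivAt_F2 ha hab hx)
    (intervalIntegrable2 ha hab)]
  have hb' : (2 * b ^ 2 - a ^ 2 - b ^ 2) / (b ^ 2 - a ^ 2) = 1 := by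
    rw [div_eq_one_iff_eq hD.ne']; ring
  have ha' : (2 * a ^ 2 - a ^ 2 - b ^ 2) / (b ^ 2 - a ^ 2) = -1 := by
    rw [div_eq_iff hD.ne']; ring
  have hsb : Real.sqrt ((b ^ 2 - b ^ 2) * (b ^ 2 - a ^ 2)) = 0 := by
    rw [show (b ^ 2 - b ^ 2) * (b ^ 2 - a ^ 2) = 0 by ring, Real.sqrt_zero]
  have hsa : Real.sqrt ((b ^ 2 - a ^ 2) * (a ^ 2 - a ^ 2)) = 0 := by
    rw [show (b ^ 2 - a ^ 2) * (a ^ 2 - a ^ 2) = 0 by ring, Real.sqrt_zero]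
  rw [hb', ha', hsb, hsa, Real.arcsin_one, Real.arcsin_neg_one]
  ring

lemma key3 (ha : 0 < a) (hab : a < b) {z : ℝ} (hz : b < z) :
    ∫ x in a..b, 2 * z * x
        / ((z ^ 2 - x ^ 2) * Real.sqrt ((b ^ 2 - x ^ 2) * (x ^ 2 - a ^ 2)))
      = π * z / Real.sqrt ((z ^ 2 - a ^ 2) * (z ^ 2 - b ^ 2)) := by
  have hb0 : 0 < b := ha.trans hab
  have hz0 : 0 < z := hb0.trans hz
  have hD : 0 < b ^ 2 - a ^ 2 := by nlinarith
  have hza : 0 < z ^ 2 - a ^ 2 := by nlinarith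
  have hzb : 0 < z ^ 2 - b ^ 2 := by nlinarith
  have hMne : ∀ t ∈ Set.Icc a b, (b ^ 2 - a ^ 2) * (z ^ 2 - t ^ 2) ≠ 0 := by
    intro t ht
    have h2 : 0 < z ^ 2 - t ^ 2 := by nlinarith [ht.1, ht.2]
    exact (mul_pos hD h2).ne'
  rw [intervalIntegral.integral_eq_sub_of_hasDerivAt_of_le hab.le
    (contF3 ha hab hz)
    (fun x hx => hasDerivAt_F3 ha hab hz hx)
    (intervalIntegrable3 ha hab hz)]
  have hMb : (b ^ 2 - a ^ 2) * (z ^ 2 - b ^ 2) ≠ 0 := (mul_pos hD hzb).ne'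
  have hMa : (b ^ 2 - a ^ 2) * (z ^ 2 - a ^ 2) ≠ 0 := (mul_pos hD hza).ne'
  have hb' : ((2 * z ^ 2 - a ^ 2 - b ^ 2) * b ^ 2 - (a ^ 2 + b ^ 2) * z ^ 2 + 2 * a ^ 2 * b ^ 2)
      / ((b ^ 2 - a ^ 2) * (z ^ 2 - b ^ 2)) = 1 := by
    rw [div_eq_one_iff_eq hMb]; ring
  have ha' : ((2 * z ^ 2 - a ^ 2 - b ^ 2) * a ^ 2 - (a ^ 2 + b ^ 2) * z ^ 2 + 2 * a ^ 2 * b ^ 2)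
      / ((b ^ 2 - a ^ 2) * (z ^ 2 - a ^ 2)) = -1 := by
    rw [div_eq_iff hMa]; ring
  rw [hb', ha', Real.arcsin_one, Real.arcsin_neg_one]
  ring

end EqAux


open EqAux in
theorem equilibrium_measure_of_two_intervals (a b : ℝ) (ha : 0 < a) (hab : a < b) :
    (∫ x, eqDensity a b x) = 1 ∧
    (∫ x, x ^ 2 * eqDensity a b x) = (a ^ 2 + b ^ 2) / 2 ∧
    ∀ z : ℝ, b < z →
      (∫ x, eqDensity a b x / (z - x))
        = z / Real.sqrt ((z ^ 2 - a ^ 2) * (z ^ 2 - b ^ 2)) := by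
  have hb0 : 0 < b := ha.trans hab
  have hπ : (0:ℝ) < π := Real.pi_pos
  set f : ℝ → ℝ := fun x => |x| / (π * Real.sqrt ((b ^ 2 - x ^ 2) * (x ^ 2 - a ^ 2))) with hf
  have hJm : MeasurableSet (Jset a b) := measurableSet_Icc.union measurableSet_Icc
  have hdisj : Disjoint (Set.Icc (-b) (-a)) (Set.Icc a b) := by
    rw [Set.disjoint_left]; rintro x ⟨h1, h2⟩ ⟨h3, h4⟩; linarith
  have hnegle : (-b : ℝ) ≤ -a := by linarith
  have hfeven : ∀ x : ℝ, f (-x) = f x := by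
    intro x
    have hsq : (-x : ℝ) ^ 2 = x ^ 2 := by ring
    simp only [hf, abs_neg, hsq]
  have hfmeas : Measurable f := by
    apply Measurable.div
    · exact measurable_abs
    · exact measurable_const.mul ((Real.continuous_sqrt.measurable).comp (by fun_prop))
  -- f equals the basic integrand on [a,b]
  have hfg : ∀ x ∈ Set.Icc a b, f x
      = (1/π) * (x / Real.sqrt ((b ^ 2 - x ^ 2) * (x ^ 2 - a ^ 2))) := by
    intro x hx
    rw [hf]
    simp only
    rw [abs_of_pos (lt_of_lt_of_le ha hx.1)]
    ring
  -- integrability of f on [a,b]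
  have hfIccPos : IntegrableOn f (Set.Icc a b) := by
    have h0 : IntegrableOn (fun x => (1/π)
        * (x / Real.sqrt ((b ^ 2 - x ^ 2) * (x ^ 2 - a ^ 2)))) (Set.Icc a b) :=
      ((intervalIntegrable_iff_integrableOn_Icc_of_le hab.le).1
        (intervalIntegrable1 ha hab)).const_mul _
    exact h0.congr_fun (fun x hx => (hfg x hx).symm) measurableSet_Icc
  have hfIccNeg : IntegrableOn f (Set.Icc (-b) (-a)) := by
    have h1 : IntervalIntegrable f volume a b :=
      (intervalIntegrable_iff_integrableOn_Icc_of_le hab.le).2 hfIccPos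
    have h2 := (IntervalIntegrable.iff_comp_neg (f := f) (a := a) (b := b)).1 h1
    simp only [hfeven] at h2
    exact (intervalIntegrable_iff_integrableOn_Icc_of_le hnegle).1 h2.symm
  -- reflection for set integrals
  have hrefl : ∀ g : ℝ → ℝ, (∫ x in Set.Icc (-b) (-a), g x) = ∫ x in a..b, g (-x) := by
    intro g
    rw [MeasureTheory.integral_Icc_eq_integral_Ioc, ← intervalIntegral.integral_of_le hnegle,
      ← intervalIntegral.integral_comp_neg]
  have hIccInt : ∀ g : ℝ → ℝ, (∫ x in Set.Icc a b, g x) = ∫ x in a..b, g x := by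
    intro g
    rw [MeasureTheory.integral_Icc_eq_integral_Ioc, ← intervalIntegral.integral_of_le hab.le]
  refine ⟨?_, ?_, ?_⟩
  · -- total mass 1
    have h1 : (∫ x, eqDensity a b x) = ∫ x in Jset a b, f x := by
      rw [show (fun x => eqDensity a b x) = (Jset a b).indicator f from rfl]
      exact integral_indicator hJm
    rw [h1, show Jset a b = Set.Icc (-b) (-a) ∪ Set.Icc a b from rfl,
      setIntegral_union hdisj measurableSet_Icc hfIccNeg hfIccPos, hrefl f, hIccInt f]
    simp only [hfeven]
    have h2 : (∫ x in a..b, f x) = 1/2 := by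
      have hcongr : (∫ x in a..b, f x) = ∫ x in a..b,
          (1/π) * (x / Real.sqrt ((b ^ 2 - x ^ 2) * (x ^ 2 - a ^ 2))) := by
        apply intervalIntegral.integral_congr
        intro x hx
        rw [Set.uIcc_of_le hab.le] at hx
        exact hfg x hx
      rw [hcongr, intervalIntegral.integral_const_mul, key1 ha hab]
      field_simp
    rw [h2]; norm_num
  · -- second moment
    have hind : (fun x => x ^ 2 * eqDensity a b x)
        = (Jset a b).indicator (fun x => x ^ 2 * f x) := by
      funext x
      by_cases hx : x ∈ Jset a b
      · simp only [eqDensity, Set.indicator_of_mem hx, hf]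
      · simp only [eqDensity, Set.indicator_of_notMem hx, mul_zero]
    have hfg2 : ∀ x ∈ Set.Icc a b, x ^ 2 * f x
        = (1/π) * (x ^ 3 / Real.sqrt ((b ^ 2 - x ^ 2) * (x ^ 2 - a ^ 2))) := by
      intro x hx
      rw [hfg x hx]
      ring
    have hIccPos2 : IntegrableOn (fun x => x ^ 2 * f x) (Set.Icc a b) := by
      have h0 : IntegrableOn (fun x => (1/π)
          * (x ^ 3 / Real.sqrt ((b ^ 2 - x ^ 2) * (x ^ 2 - a ^ 2)))) (Set.Icc a b) :=
        ((intervalIntegrable_iff_integrableOn_Icc_of_le hab.le).1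
          (intervalIntegrable2 ha hab)).const_mul _
      exact h0.congr_fun (fun x hx => (hfg2 x hx).symm) measurableSet_Icc
    have heven2 : ∀ x : ℝ, (-x) ^ 2 * f (-x) = x ^ 2 * f x := by
      intro x; rw [hfeven]; ring_nf
    have hIccNeg2 : IntegrableOn (fun x => x ^ 2 * f x) (Set.Icc (-b) (-a)) := by
      have h1 : IntervalIntegrable (fun x => x ^ 2 * f x) volume a b :=
        (intervalIntegrable_iff_integrableOn_Icc_of_le hab.le).2 hIccPos2
      have h2 := (IntervalIntegrable.iff_comp_neg (f := fun x => x ^ 2 * f x) (a := a) (b := b)).1 h1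
      simp only [heven2] at h2
      exact (intervalIntegrable_iff_integrableOn_Icc_of_le hnegle).1 h2.symm
    rw [show (∫ x, x ^ 2 * eqDensity a b x)
        = ∫ x in Jset a b, x ^ 2 * f x by rw [hind]; exact integral_indicator hJm]
    rw [show Jset a b = Set.Icc (-b) (-a) ∪ Set.Icc a b from rfl,
      setIntegral_union hdisj measurableSet_Icc hIccNeg2 hIccPos2,
      hrefl (fun x => x ^ 2 * f x), hIccInt (fun x => x ^ 2 * f x)]
    simp only [heven2]
    have h2 : (∫ x in a..b, x ^ 2 * f x) = (a ^ 2 + b ^ 2) / 4 := by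
      have hcongr : (∫ x in a..b, x ^ 2 * f x) = ∫ x in a..b,
          (1/π) * (x ^ 3 / Real.sqrt ((b ^ 2 - x ^ 2) * (x ^ 2 - a ^ 2))) := by
        apply intervalIntegral.integral_congr
        intro x hx
        rw [Set.uIcc_of_le hab.le] at hx
        exact hfg2 x hx
      rw [hcongr, intervalIntegral.integral_const_mul, key2 ha hab]
      field_simp
    rw [h2]; ring
  · -- Stieltjes transform
    intro z hz
    have hz0 : 0 < z := hb0.trans hz
    have hza : 0 < z ^ 2 - a ^ 2 := by nlinarith
    have hzb : 0 < z ^ 2 - b ^ 2 := by nlinarith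
    have hzxpos : ∀ x ∈ Set.Icc a b, 0 < z ^ 2 - x ^ 2 := fun x hx => by
      nlinarith [hx.1, hx.2]
    have hzsub : ∀ x ∈ Set.Icc a b, 0 < z - x := fun x hx => by
      have := hx.2; linarith
    have hzadd : ∀ x ∈ Set.Icc a b, 0 < z + x := fun x hx => by
      have := hx.1; linarith
    -- the dominating function
    set G : ℝ → ℝ := fun x => (1/π) * (2 * z * x
      / ((z ^ 2 - x ^ 2) * Real.sqrt ((b ^ 2 - x ^ 2) * (x ^ 2 - a ^ 2)))) with hG
    have hGInt : IntegrableOn G (Set.Icc a b) :=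
      ((intervalIntegrable_iff_integrableOn_Icc_of_le hab.le).1
        (intervalIntegrable3 ha hab hz)).const_mul _
    have hfnonneg : ∀ x, 0 ≤ f x := fun x =>
      div_nonneg (abs_nonneg x) (by positivity)
    -- pointwise identities and bounds on [a,b]
    have hGval : ∀ x ∈ Set.Icc a b, G x = f x * (2 * z) / (z ^ 2 - x ^ 2) := by
      intro x hx
      rw [hG, hf]
      simp only
      rw [abs_of_pos (lt_of_lt_of_le ha hx.1)]
      simp only [div_eq_mul_inv, mul_inv]
      ring
    have hminus : ∀ x ∈ Set.Icc a b, f x / (z - x) ≤ G x := by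
      intro x hx
      rw [hGval x hx]
      have h1 : f x / (z - x) = f x * (z + x) / (z ^ 2 - x ^ 2) := by
        rw [div_eq_div_iff (hzsub x hx).ne' (hzxpos x hx).ne']
        ring
      rw [h1, div_le_div_iff_of_pos_right (hzxpos x hx)]
      nlinarith [mul_nonneg (hfnonneg x) (hzsub x hx).le]
    have hplus : ∀ x ∈ Set.Icc a b, f x / (z + x) ≤ G x := by
      intro x hx
      rw [hGval x hx]
      have h1 : f x / (z + x) = f x * (z - x) / (z ^ 2 - x ^ 2) := by
        rw [div_eq_div_iff (hzadd x hx).ne' (hzxpos x hx).ne']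
        ring
      rw [h1, div_le_div_iff_of_pos_right (hzxpos x hx)]
      nlinarith [mul_nonneg (hfnonneg x) (hzadd x hx).le]
    have hG0 : ∀ x ∈ Set.Icc a b, 0 ≤ G x := by
      intro x hx
      rw [hGval x hx]
      exact div_nonneg (mul_nonneg (hfnonneg x) (by linarith)) (hzxpos x hx).le
    have hIntMinus : IntegrableOn (fun x => f x / (z - x)) (Set.Icc a b) := by
      apply Integrable.mono hGInt
        ((hfmeas.div (by fun_prop : Measurable fun x : ℝ => z - x)).aestronglyMeasurable)
      rw [ae_restrict_iff' measurableSet_Icc]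
      refine ae_of_all _ fun x hx => ?_
      have h0 : 0 ≤ f x / (z - x) := div_nonneg (hfnonneg x) (hzsub x hx).le
      rw [Real.norm_eq_abs, Real.norm_eq_abs, Pi.div_apply, abs_of_nonneg h0, abs_of_nonneg (hG0 x hx)]
      exact hminus x hx
    have hIntPlus : IntegrableOn (fun x => f x / (z + x)) (Set.Icc a b) := by
      apply Integrable.mono hGInt
        ((hfmeas.div (by fun_prop : Measurable fun x : ℝ => z + x)).aestronglyMeasurable)
      rw [ae_restrict_iff' measurableSet_Icc]
      refine ae_of_all _ fun x hx => ?_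
      have h0 : 0 ≤ f x / (z + x) := div_nonneg (hfnonneg x) (hzadd x hx).le
      rw [Real.norm_eq_abs, Real.norm_eq_abs, Pi.div_apply, abs_of_nonneg h0, abs_of_nonneg (hG0 x hx)]
      exact hplus x hx
    have hIntNeg3 : IntegrableOn (fun x => f x / (z - x)) (Set.Icc (-b) (-a)) := by
      have h1 : IntervalIntegrable (fun x => f x / (z + x)) volume a b :=
        (intervalIntegrable_iff_integrableOn_Icc_of_le hab.le).2 hIntPlus
      have h2 := (IntervalIntegrable.iff_comp_neg (f := fun x => f x / (z + x)) (a := a) (b := b)).1 h1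
      have h3 : (fun x => f (-x) / (z + -x)) = fun x => f x / (z - x) := by
        funext x
        rw [hfeven, ← sub_eq_add_neg]
      rw [h3] at h2
      exact (intervalIntegrable_iff_integrableOn_Icc_of_le hnegle).1 h2.symm
    have hind3 : (fun x => eqDensity a b x / (z - x))
        = (Jset a b).indicator (fun x => f x / (z - x)) := by
      funext x
      by_cases hx : x ∈ Jset a b
      · simp only [eqDensity, Set.indicator_of_mem hx, hf]
      · simp only [eqDensity, Set.indicator_of_notMem hx, zero_div]
    rw [show (∫ x, eqDensity a b x / (z - x)) = ∫ x in Jset a b, f x / (z - x) by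
      rw [hind3]; exact integral_indicator hJm]
    rw [show Jset a b = Set.Icc (-b) (-a) ∪ Set.Icc a b from rfl,
      setIntegral_union hdisj measurableSet_Icc hIntNeg3 hIntMinus,
      hrefl (fun x => f x / (z - x)), hIccInt (fun x => f x / (z - x))]
    simp only [hfeven, sub_neg_eq_add]
    have hIIp : IntervalIntegrable (fun x => f x / (z + x)) volume a b :=
      (intervalIntegrable_iff_integrableOn_Icc_of_le hab.le).2 hIntPlus
    have hIIm : IntervalIntegrable (fun x => f x / (z - x)) volume a b :=
      (intervalIntegrable_iff_integrableOn_Icc_of_le hab.le).2 hIntMinus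
    rw [← intervalIntegral.integral_add hIIp hIIm]
    have hcongr : (∫ x in a..b, (f x / (z + x) + f x / (z - x))) = ∫ x in a..b, G x := by
      apply intervalIntegral.integral_congr
      intro x hx
      rw [Set.uIcc_of_le hab.le] at hx
      rw [hGval x hx]
      have h1 := (hzadd x hx).ne'
      have h2 := (hzsub x hx).ne'
      have h3 := (hzxpos x hx).ne'
      have halg : ∀ c : ℝ, c / (z + x) + c / (z - x) = c * (2 * z) / (z ^ 2 - x ^ 2) := by
        intro c
        field_simp [h1, h2, h3]
        ring
      exact halg (f x)
    rw [hcongr]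
    have hGint : (∫ x in a..b, G x) = (1/π) * (π * z
        / Real.sqrt ((z ^ 2 - a ^ 2) * (z ^ 2 - b ^ 2))) := by
      rw [hG]
      rw [intervalIntegral.integral_const_mul, key3 ha hab hz]
    rw [hGint]
    field_simp
end
end
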